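/- arXiv:2312.00544 — 5 statements merged into one kernel-verified Lean document; each statement's English description precedes it below -/
import Mathlib

section
/- Let p be a prime and r, s, k positive integers with p^s ≤ k < p^{s+1}. Then for all integers n, binomial(n + p^{s+r}, k) ≡ binomial(n, k) (mod p^r). -/
open Finset

lemma aux_dvd_choose (p : ℕ) (hp : p.Prime) (r s k j : ℕ) (hr : 0 < r)
    (hj : 0 < j) (hjk : j ≤ k) (hks' : k < p ^ (s + 1)) :
    p ^ r ∣ Nat.choose (p ^ (s + r)) j := by
  have hjlt : j < p ^ (s + 1) := lt_of_le_of_lt hjk hks'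
  have hjle : j ≤ p ^ (s + r) :=
    hjlt.le.trans (Nat.pow_le_pow_right hp.pos (by omega))
  have hm : multiplicity p j ≤ s := by
    by_contra h
    push_neg at h
    have : p ^ (s + 1) ∣ j :=
      dvd_trans (pow_dvd_pow p (by omega)) (pow_multiplicity_dvd p j)
    have := Nat.le_of_dvd hj this
    omega
  apply pow_dvd_of_le_emultiplicity
  rw [Nat.Prime.emultiplicity_choose_prime_pow hp hjle hj.ne']
  exact_mod_cast Nat.le_sub_of_add_le (by omega)

/-- Congruence of generalized binomial coefficients: for a prime `p` and positive
integers `r, s, k` with `p^s ≤ k < p^(s+1)`, we have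
`C(n + p^(s+r), k) ≡ C(n, k) (mod p^r)` for all integers `n`, where `C(n,k)` is the
binomial coefficient extended polynomially to all integers. -/
theorem stmt_0 (p : ℕ) (hp : p.Prime) (r s k : ℕ) (hr : 0 < r) (hs : 0 < s)
    (hk : 0 < k) (hks : p ^ s ≤ k) (hks' : k < p ^ (s + 1)) (n : ℤ) :
    Ring.choose (n + (p : ℤ) ^ (s + r)) k ≡ Ring.choose n k [ZMOD (p : ℤ) ^ r] := by
  rw [Ring.add_choose_eq k (Commute.all _ _)]
  rw [← Finset.sum_erase_add _ _ (by simp : ((k, 0) : ℕ × ℕ) ∈ antidiagonal k)]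
  simp only [Ring.choose_zero_right, mul_one]
  have hsum : (∑ ij ∈ (antidiagonal k).erase (k, 0),
      Ring.choose n ij.1 * Ring.choose ((p : ℤ) ^ (s + r)) ij.2) ≡ 0 [ZMOD (p : ℤ) ^ r] := by
    apply Int.modEq_zero_iff_dvd.mpr
    apply Finset.dvd_sum
    intro ij hij
    have h1 : ij.1 + ij.2 = k := by
      have := Finset.mem_of_mem_erase hij
      simpa [Finset.mem_antidiagonal] using this
    have h2 : ij.2 ≠ 0 := by
      intro h0
      have heq : ij = (k, 0) := by
        ext <;> simp [h0, ← h1]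
      rw [heq] at hij
      exact Finset.notMem_erase _ _ hij
    have hcast : ((p : ℤ)) ^ (s + r) = ((p ^ (s + r) : ℕ) : ℤ) := by push_cast; ring
    rw [hcast, Ring.choose_natCast]
    have hdvd : (p : ℤ) ^ r ∣ ((p ^ (s + r)).choose ij.2 : ℤ) := by
      have := aux_dvd_choose p hp r s k ij.2 hr (Nat.pos_of_ne_zero h2) (by omega) hks'
      exact_mod_cast Int.natCast_dvd_natCast.mpr this
    exact Dvd.dvd.mul_left hdvd _
  simpa using hsum.add_right (Ring.choose n k)
end

section
/- Let f ∈ ℚ[x₁,…,xₙ] be integer-valued on ℤⁿ, let q = p^s be a prime power, let d = max_i deg_{x_i}(f), and set r = p^{⌊log_p d⌋ + s}. Then for all v, w ∈ ℤⁿ, f(v + r·w) ≡ f(v) (mod q). -/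
open MvPolynomial

open Finset Polynomial fwdDiff

lemma chooseDvd (p s d k : ℕ) (hp : p.Prime) (hs : 0 < s) (hk : k ≠ 0) (hkd : k ≤ d) :
    (p ^ s : ℕ) ∣ (p ^ (Nat.log p d + s)).choose k := by
  have hkn : k ≤ p ^ (Nat.log p d + s) := by
    calc k ≤ d := hkd
    _ ≤ p ^ (Nat.log p d + 1) := (Nat.lt_pow_succ_log_self hp.one_lt d).le
    _ ≤ p ^ (Nat.log p d + s) := Nat.pow_le_pow_right hp.pos (by omega)
  have hmult : multiplicity p k ≤ Nat.log p d := by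
    have h1 : p ^ (multiplicity p k) ∣ k := pow_multiplicity_dvd p k
    have := Nat.le_log_of_pow_le hp.one_lt (Nat.le_of_dvd (Nat.pos_of_ne_zero hk) h1)
    exact this.trans (Nat.log_mono_right hkd)
  apply pow_dvd_of_le_emultiplicity
  rw [hp.emultiplicity_choose_prime_pow hkn hk]
  exact_mod_cast by omega

lemma fwdDiff_iter_cast (G : ℤ → ℤ) (k : ℕ) :
    ∀ t : ℤ, ((fwdDiff (1:ℤ))^[k] (fun u : ℤ => (G u : ℚ))) t
      = (((fwdDiff (1:ℤ))^[k] G t : ℤ) : ℚ) := by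
  induction k with
  | zero => intro t; simp
  | succ k IH =>
    intro t
    rw [Function.iterate_succ_apply', Function.iterate_succ_apply']
    simp only [fwdDiff, IH]
    push_cast
    ring

lemma iter_vanish_ge (G : ℤ → ℤ) (d : ℕ)
    (hvanish : (fwdDiff (1:ℤ))^[d+1] G = fun _ => 0) (k : ℕ) (hk : d < k) :
    (fwdDiff (1:ℤ))^[k] G = fun _ => 0 := by
  obtain ⟨j, rfl⟩ : ∃ j, k = j + (d + 1) := ⟨k - (d+1), by omega⟩
  rw [Function.iterate_add_apply, hvanish]
  exact Function.iterate_fixed (fwdDiff_const (1:ℤ) (0:ℤ)) j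

lemma keyStep (G : ℤ → ℤ) (d p s : ℕ) (hp : p.Prime) (hs : 0 < s)
    (hvanish : (fwdDiff (1:ℤ))^[d+1] G = fun _ => 0) (t : ℤ) :
    ((p:ℤ))^s ∣ G (t + (p:ℤ) ^ (Nat.log p d + s)) - G t := by
  set r : ℕ := p ^ (Nat.log p d + s) with hr
  have hGN := shift_eq_sum_fwdDiff_iter (1:ℤ) G r t
  have hsmul : r • (1:ℤ) = (r:ℤ) := by simp
  rw [hsmul] at hGN
  have hcast : (p:ℤ) ^ (Nat.log p d + s) = (r:ℤ) := by push_cast [hr]; ring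
  rw [hcast, hGN, Finset.sum_range_succ']
  simp only [Nat.choose_zero_right, Function.iterate_zero, id_eq, one_smul,
    add_sub_cancel_right]
  apply Finset.dvd_sum
  intro i _
  by_cases hid : i + 1 ≤ d
  · have := chooseDvd p s d (i+1) hp hs (Nat.succ_ne_zero i) hid
    obtain ⟨c, hc⟩ := this
    rw [nsmul_eq_mul, hc]
    push_cast
    exact ⟨(c : ℤ) * (fwdDiff (1:ℤ))^[i+1] G t, by push_cast; ring⟩
  · rw [iter_vanish_ge G d hvanish (i+1) (by omega)]
    simp

lemma keyStepMul (G : ℤ → ℤ) (d p s : ℕ) (hp : p.Prime) (hs : 0 < s)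
    (hvanish : (fwdDiff (1:ℤ))^[d+1] G = fun _ => 0) (t m : ℤ) :
    ((p:ℤ))^s ∣ G (t + (p:ℤ) ^ (Nat.log p d + s) * m) - G t := by
  set r : ℤ := (p:ℤ) ^ (Nat.log p d + s) with hr
  induction m using Int.induction_on with
  | zero => simp
  | succ m IH =>
    have h1 := keyStep G d p s hp hs hvanish (t + r * m)
    rw [← hr] at h1
    have : G (t + r * (m + 1)) - G t
        = (G (t + r * m + r) - G (t + r * m)) + (G (t + r * m) - G t) := by
      ring_nf
    rw [this]
    exact dvd_add h1 IH
  | pred m IH =>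
    have h1 := keyStep G d p s hp hs hvanish (t + r * (-m - 1))
    rw [← hr] at h1
    have heq : t + r * (-m - 1) + r = t + r * (-m) := by ring
    rw [heq] at h1
    have : G (t + r * (-(m:ℤ) - 1)) - G t
        = (G (t + r * (-m)) - G t) - (G (t + r * (-m)) - G (t + r * (-m - 1))) := by
      ring_nf
    rw [this]
    exact dvd_sub IH h1

lemma fwdDiff_polyEval (g : Polynomial ℚ) :
    Δ_[(1:ℤ)] (fun t : ℤ => g.eval (t:ℚ)) =
      fun t : ℤ => (g.comp (Polynomial.X + Polynomial.C 1) - g).eval (t:ℚ) := by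
  funext t
  simp [fwdDiff, Polynomial.eval_comp]

lemma natDegree_comp_sub (g : Polynomial ℚ) (k : ℕ) (hg : g.natDegree ≤ k + 1) :
    (g.comp (Polynomial.X + Polynomial.C 1) - g).natDegree ≤ k := by
  rcases eq_or_ne g.natDegree 0 with h0 | h0
  · obtain ⟨c, rfl⟩ := Polynomial.natDegree_eq_zero.mp h0
    simp
  have hg0 : g ≠ 0 := fun h => by simp [h] at h0
  have hmq : (Polynomial.X + Polynomial.C (1:ℚ)).natDegree = 1 := by
    simpa using Polynomial.natDegree_X_add_C (1:ℚ)
  have hnd : (g.comp (Polynomial.X + Polynomial.C 1)).natDegree = g.natDegree := by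
    rw [Polynomial.natDegree_comp, hmq, mul_one]
  have hlc : (g.comp (Polynomial.X + Polynomial.C 1)).leadingCoeff = g.leadingCoeff := by
    rw [Polynomial.leadingCoeff_comp (by rw [hmq]; exact one_ne_zero),
      (Polynomial.monic_X_add_C (1:ℚ)).leadingCoeff, one_pow, mul_one]
  have hcomp0 : g.comp (Polynomial.X + Polynomial.C 1) ≠ 0 := by
    intro h
    rw [h] at hlc
    exact hg0 (Polynomial.leadingCoeff_eq_zero.mp hlc.symm)
  have hdeg : (g.comp (Polynomial.X + Polynomial.C 1)).degree = g.degree := by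
    rw [Polynomial.degree_eq_natDegree hcomp0, Polynomial.degree_eq_natDegree hg0, hnd]
  have hdlt := Polynomial.degree_sub_lt hdeg hcomp0 hlc
  rw [hdeg, Polynomial.degree_eq_natDegree hg0] at hdlt
  by_cases hsub : g.comp (Polynomial.X + Polynomial.C 1) - g = 0
  · rw [hsub]; simp
  · have := (Polynomial.natDegree_lt_iff_degree_lt hsub).mpr hdlt
    omega

lemma fwdDiff_iter_poly_zero (d : ℕ) : ∀ (g : Polynomial ℚ), g.natDegree ≤ d →
    (fwdDiff (1:ℤ))^[d+1] (fun t : ℤ => g.eval (t:ℚ)) = fun _ => 0 := by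
  induction d with
  | zero =>
    intro g hg
    obtain ⟨c, rfl⟩ := Polynomial.natDegree_eq_zero.mp (Nat.le_zero.mp hg)
    simpa using fwdDiff_const (1:ℤ) (c : ℚ)
  | succ k IH =>
    intro g hg
    rw [Function.iterate_succ_apply, fwdDiff_polyEval]
    exact IH _ (natDegree_comp_sub g k hg)

lemma aux_poly {n : ℕ} (f : MvPolynomial (Fin n) ℚ) (j : Fin n) (c : Fin n → ℚ) :
    ∃ g : Polynomial ℚ, g.natDegree ≤ f.degreeOf j ∧
      ∀ x : ℚ, g.eval x = eval (Function.update c j x) f := by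
  classical
  set σ : Fin n → Polynomial ℚ := fun i => if i = j then Polynomial.X else Polynomial.C (c i)
    with hσ
  refine ⟨eval₂ Polynomial.C σ f, ?_, ?_⟩
  · rw [eval₂_eq]
    refine (Polynomial.natDegree_sum_le _ _).trans ?_
    rw [Finset.fold_max_le]
    refine ⟨Nat.zero_le _, fun u hu => ?_⟩
    refine (Polynomial.natDegree_mul_le).trans ?_
    rw [Polynomial.natDegree_C, zero_add]
    refine (Polynomial.natDegree_prod_le _ _).trans ?_
    have hle : ∀ i ∈ u.support, ((σ i) ^ u i).natDegree ≤ if i = j then u j else 0 := by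
      intro i _
      by_cases hij : i = j
      · subst hij
        simp [hσ, Polynomial.natDegree_X_pow]
      · simp [hσ, hij, Polynomial.natDegree_pow]
    refine (Finset.sum_le_sum hle).trans ?_
    have : ∑ i ∈ u.support, (if i = j then u j else 0) ≤ u j := by
      rw [Finset.sum_ite_eq' u.support j (fun _ => u j)]
      split <;> simp
    exact this.trans (monomial_le_degreeOf j hu)
  · intro x
    rw [polynomial_eval_eval₂]
    have h1 : (Polynomial.evalRingHom x).comp Polynomial.C = RingHom.id ℚ := by
      ext y; simp
    rw [h1]
    rw [show (fun i => Polynomial.eval x (σ i)) = Function.update c j x by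
      funext i
      by_cases hij : i = j <;> simp [hσ, hij, Function.update_apply]]
    rw [MvPolynomial.eval₂_id]

lemma coordStep (n : ℕ) (f : MvPolynomial (Fin n) ℚ)
    (hint : ∀ a : Fin n → ℤ, ∃ z : ℤ, eval (fun i => (a i : ℚ)) f = (z : ℚ))
    (p s d : ℕ) (hp : p.Prime) (hs : 0 < s) (hdeg : ∀ j, f.degreeOf j ≤ d)
    (j : Fin n) (c : Fin n → ℤ) (m : ℤ) :
    ∃ z : ℤ,
      eval (fun i => ((Function.update c j (c j + (p:ℤ)^(Nat.log p d + s) * m) i : ℤ) : ℚ)) f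
      - eval (fun i => ((c i : ℤ) : ℚ)) f = (p:ℚ)^s * z := by
  obtain ⟨g, hgdeg, hgeval⟩ := aux_poly f j (fun i => ((c i : ℤ) : ℚ))
  have hupd : ∀ t : ℤ, (fun i => ((Function.update c j t i : ℤ) : ℚ))
      = Function.update (fun i => ((c i : ℤ):ℚ)) j ((t:ℚ)) := by
    intro t; funext i; by_cases hij : i = j <;> simp [Function.update_apply, hij]
  have hint' : ∀ t : ℤ, ∃ z : ℤ, g.eval ((t:ℚ)) = (z:ℚ) := by
    intro t
    rw [hgeval, ← hupd t]
    exact hint _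
  choose G hG using hint'
  have hGq : (fun t : ℤ => ((G t : ℤ):ℚ)) = fun t : ℤ => g.eval (t:ℚ) := by
    funext t; rw [← hG t]
  have hq0 : (fwdDiff (1:ℤ))^[d+1] (fun t : ℤ => g.eval (t:ℚ)) = fun _ => 0 :=
    fwdDiff_iter_poly_zero d g (hgdeg.trans (hdeg j))
  have hvanish : (fwdDiff (1:ℤ))^[d+1] G = fun _ => 0 := by
    funext t
    have h2 := fwdDiff_iter_cast G (d+1) t
    rw [hGq, hq0] at h2
    have h3 : (((fwdDiff (1:ℤ))^[d+1] G t : ℤ) : ℚ) = 0 := h2.symm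
    exact_mod_cast h3
  obtain ⟨z, hz⟩ := keyStepMul G d p s hp hs hvanish (c j) m
  refine ⟨z, ?_⟩
  have e1 : eval (fun i => ((Function.update c j (c j + (p:ℤ)^(Nat.log p d + s) * m) i : ℤ):ℚ)) f
      = ((G (c j + (p:ℤ)^(Nat.log p d + s) * m) : ℤ) : ℚ) := by
    rw [hupd, ← hgeval, hG]
  have e2 : eval (fun i => ((c i : ℤ):ℚ)) f = ((G (c j) : ℤ):ℚ) := by
    have h3 : (fun i => ((c i:ℤ):ℚ)) = Function.update (fun i => ((c i:ℤ):ℚ)) j ((c j : ℤ):ℚ) := by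
      rw [Function.update_eq_self]
    rw [h3, ← hgeval, hG]
  rw [e1, e2]
  exact_mod_cast hz

/-- Periodicity of an integer-valued polynomial modulo a prime power: if
`f ∈ ℚ[x₁,…,xₙ]` is integer-valued, `q = p^s` is a prime power,
`d = maxᵢ deg_{xᵢ} f ≥ 1`, and `r = p^(⌊log_p d⌋ + s)`, then
`f(v + r·w) ≡ f(v) (mod q)` for all `v, w ∈ ℤⁿ`. -/
theorem stmt_2 (n : ℕ) (f : MvPolynomial (Fin n) ℚ)
    (hint : ∀ a : Fin n → ℤ, ∃ z : ℤ, eval (fun i => (a i : ℚ)) f = (z : ℚ))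
    (p s : ℕ) (hp : p.Prime) (hs : 0 < s)
    (d : ℕ) (hd : d = Finset.univ.sup (fun i => f.degreeOf i)) (hd1 : 1 ≤ d)
    (r : ℕ) (hr : r = p ^ (Nat.log p d + s))
    (v w : Fin n → ℤ) :
    ∃ z : ℤ, eval (fun i => ((v i + (r : ℤ) * w i : ℤ) : ℚ)) f
        - eval (fun i => (v i : ℚ)) f = ((p : ℚ) ^ s) * z := by
  have hdeg : ∀ j : Fin n, f.degreeOf j ≤ d := fun j =>
    hd ▸ Finset.le_sup (f := fun i => f.degreeOf i) (Finset.mem_univ j)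
  have hrZ : (r : ℤ) = (p:ℤ) ^ (Nat.log p d + s) := by rw [hr]; push_cast; ring
  have main : ∀ k : ℕ, ∃ z : ℤ,
      eval (fun i : Fin n => ((if (i : ℕ) < k then v i + (r:ℤ) * w i else v i : ℤ) : ℚ)) f
        - eval (fun i => (v i : ℚ)) f = ((p : ℚ) ^ s) * z := by
    intro k
    induction k with
    | zero => exact ⟨0, by simp⟩
    | succ k IH =>
      obtain ⟨z, hz⟩ := IH
      by_cases hk : k < n
      · set c : Fin n → ℤ := fun i => if (i : ℕ) < k then v i + (r:ℤ) * w i else v i with hc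
        set j : Fin n := ⟨k, hk⟩ with hj
        obtain ⟨z', hz'⟩ := coordStep n f hint p s d hp hs hdeg j c (w j)
        refine ⟨z + z', ?_⟩
        have hcj : c j = v j := by simp [hc, hj]
        have hpt : (fun i : Fin n => ((if (i : ℕ) < k + 1 then v i + (r:ℤ) * w i else v i : ℤ) : ℚ))
            = (fun i => ((Function.update c j (c j + (p:ℤ)^(Nat.log p d + s) * (w j)) i : ℤ) : ℚ)) := by
          funext i
          by_cases hij : i = j
          · subst hij
            simp [Function.update_self, hcj, ← hrZ, hj, hc]
          · have hne : (i : ℕ) ≠ k := fun h => hij (Fin.ext h)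
            rw [Function.update_apply, if_neg hij, hc]
            by_cases h1 : (i : ℕ) < k
            · simp [h1, Nat.lt_succ_of_lt h1]
            · have h2 : ¬ (i : ℕ) < k + 1 := by omega
              simp [h1, h2]
        rw [hpt]
        have : eval (fun i => ((Function.update c j (c j + (p:ℤ)^(Nat.log p d + s) * (w j)) i : ℤ) : ℚ)) f
            - eval (fun i => (v i : ℚ)) f
            = (eval (fun i => ((Function.update c j (c j + (p:ℤ)^(Nat.log p d + s) * (w j)) i : ℤ) : ℚ)) f
              - eval (fun i => ((c i : ℤ) : ℚ)) f)
              + (eval (fun i => ((c i : ℤ) : ℚ)) f - eval (fun i => (v i : ℚ)) f) := by ring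
        rw [this, hz', hz]
        push_cast
        ring
      · refine ⟨z, ?_⟩
        have : (fun i : Fin n => ((if (i : ℕ) < k + 1 then v i + (r:ℤ) * w i else v i : ℤ) : ℚ))
            = (fun i : Fin n => ((if (i : ℕ) < k then v i + (r:ℤ) * w i else v i : ℤ) : ℚ)) := by
          funext i
          have h1 : (i : ℕ) < k := lt_of_lt_of_le i.isLt (by omega)
          simp [h1, Nat.lt_succ_of_lt h1]
        rw [this]
        exact hz
  obtain ⟨z, hz⟩ := main n
  refine ⟨z, ?_⟩
  have : (fun i : Fin n => ((if (i : ℕ) < n then v i + (r:ℤ) * w i else v i : ℤ) : ℚ))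
      = (fun i => ((v i + (r:ℤ) * w i : ℤ) : ℚ)) := by
    funext i; simp [i.isLt]
  rw [← this]
  exact hz
end

section
/- Let m = q₁···q_r with qᵢ = pᵢ^{αᵢ} its prime-power factorization, let f : ℤⁿ → ℤ be skew-symmetric (vanishing whenever coordinates coincide), and suppose ϖᵢ is a qᵢ-period of f for each i, with ϖmax = maxᵢ ϖᵢ. Then for n ≥ 2, the density of {x ∈ ℤⁿ : m ∤ f(x)} is at most ω(m)·exp(−n²/(4ϖmax)), where ω(m) = r is the number of distinct prime factors of m. -/
open Finset in
lemma aux_card_inj (n ϖ : ℕ) [NeZero ϖ] :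
    (Finset.univ.filter (fun g : Fin n → ZMod ϖ => Function.Injective g)).card
      = ϖ.descFactorial n := by
  classical
  rw [← Fintype.card_subtype,
    Fintype.card_congr (Equiv.subtypeInjectiveEquivEmbedding (Fin n) (ZMod ϖ)),
    Fintype.card_embedding_eq, ZMod.card, Fintype.card_fin]

lemma aux_descFactorial_le (n ϖ : ℕ) (hϖ : 1 ≤ ϖ) :
    ((ϖ.descFactorial n : ℕ) : ℝ)
      ≤ (ϖ:ℝ)^n * Real.exp (-(∑ k ∈ Finset.range n, (k:ℝ)) / ϖ) := by
  have hϖR : (0:ℝ) < ϖ := by exact_mod_cast hϖ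
  rw [Nat.descFactorial_eq_prod_range]
  push_cast
  calc ∏ k ∈ Finset.range n, ((ϖ - k : ℕ):ℝ)
      ≤ ∏ k ∈ Finset.range n, ((ϖ:ℝ) * Real.exp (-(k:ℝ)/ϖ)) := by
        apply Finset.prod_le_prod
        · intro k _; positivity
        · intro k _
          rcases le_or_gt k ϖ with hk | hk
          · have h1 := Real.add_one_le_exp (-(k:ℝ)/ϖ)
            have h2 : (ϖ:ℝ) * (-(k:ℝ)/ϖ + 1) ≤ ϖ * Real.exp (-(k:ℝ)/ϖ) :=
              mul_le_mul_of_nonneg_left h1 hϖR.le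
            have h3 : (ϖ:ℝ) * (-(k:ℝ)/ϖ + 1) = (ϖ:ℝ) - k := by field_simp; ring
            rw [Nat.cast_sub hk]
            linarith
          · have h0 : ϖ - k = 0 := Nat.sub_eq_zero_of_le hk.le
            rw [h0]; push_cast; positivity
    _ = (ϖ:ℝ)^n * Real.exp (-(∑ k ∈ Finset.range n, (k:ℝ)) / ϖ) := by
        rw [Finset.prod_mul_distrib, Finset.prod_const, Finset.card_range,
          ← Real.exp_sum]
        congr 1
        rw [← Finset.sum_neg_distrib, Finset.sum_div]


open Finset in
/-- Let `m = q₁⋯q_r` with `qᵢ = pᵢ^{αᵢ}` its prime-power factorization and let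
`f : ℤⁿ → ℤ` be skew-symmetric. If `ϖᵢ` is a `qᵢ`-period of `f` and
`ϖmax = maxᵢ ϖᵢ`, then for `n ≥ 2` the density of `{x : m ∤ f(x)}`, computed on the
fundamental box of side `ϖ₁⋯ϖ_r`, is at most `ω(m)·exp(−n²/(4ϖmax))` with `ω(m) = r`. -/
theorem stmt_16 (n r : ℕ) (hn : 2 ≤ n)
    (p α : Fin r → ℕ) (hp : ∀ i, (p i).Prime) (hα : ∀ i, 1 ≤ α i)
    (hinj : Function.Injective p)
    (m : ℕ) (hm : m = ∏ i, p i ^ α i)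
    (f : (Fin n → ℤ) → ℤ)
    (hskew : ∀ x : Fin n → ℤ, ¬ Function.Injective x → f x = 0)
    (ϖ : Fin r → ℕ) (hϖ : ∀ i, 1 ≤ ϖ i)
    (hper : ∀ i, ∀ v w : Fin n → ℤ,
      f (v + (ϖ i : ℤ) • w) ≡ f v [ZMOD ((p i ^ α i : ℕ) : ℤ)]) :
    (Nat.card {x : Fin n → ℤ |
        (∀ i, 0 ≤ x i ∧ x i < (∏ j, ϖ j : ℕ)) ∧ ¬ (m : ℤ) ∣ f x} : ℝ)
      / ((∏ j, ϖ j : ℕ) : ℝ) ^ n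
    ≤ (r : ℝ) * Real.exp (-(n : ℝ) ^ 2 / (4 * (univ.sup ϖ : ℕ))) := by
  classical
  set W : ℕ := ∏ j, ϖ j with hWdef
  set M : ℕ := univ.sup ϖ with hMdef
  have hW : 0 < W := Finset.prod_pos (fun j _ => hϖ j)
  set box : Finset (Fin n → ℤ) := Fintype.piFinset fun _ => Finset.Ico (0:ℤ) (W:ℤ)
    with hbox
  set S : Finset (Fin n → ℤ) := box.filter (fun x => ¬ (m:ℤ) ∣ f x) with hS
  have hset : {x : Fin n → ℤ |
      (∀ i, 0 ≤ x i ∧ x i < (W : ℕ)) ∧ ¬ (m : ℤ) ∣ f x} = ↑S := by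
    ext x
    simp only [hS, hbox, Set.mem_setOf_eq, Finset.coe_filter, Fintype.mem_piFinset,
      Finset.mem_Ico]
  rw [hset, Nat.card_coe_set_eq, Set.ncard_coe_finset]
  -- the bad Finsets
  set T : Fin r → Finset (Fin n → ℤ) :=
    fun i => box.filter (fun x => Function.Injective (fun j => ((x j : ZMod (ϖ i)))))
    with hT
  -- S is covered by the T i
  have hsub : S ⊆ univ.biUnion T := by
    intro x hx
    rw [hS, Finset.mem_filter] at hx
    obtain ⟨hxbox, hxdvd⟩ := hx
    have hexists : ∃ i, ¬ ((p i ^ α i : ℕ):ℤ) ∣ f x := by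
      by_contra h
      push_neg at h
      apply hxdvd
      have hdvd : (∏ i, ((p i ^ α i : ℕ):ℤ)) ∣ f x := by
        apply Finset.prod_dvd_of_coprime _ (fun i _ => h i)
        intro i _ j _ hij
        simp only [Function.onFun]
        rw [Int.natCast_pow, Int.natCast_pow, ← Nat.cast_pow, ← Nat.cast_pow,
          Nat.isCoprime_iff_coprime]
        exact Nat.Coprime.pow _ _
          ((Nat.coprime_primes (hp i) (hp j)).mpr (fun he => hij (hinj he)))
      rw [hm]
      push_cast
      push_cast at hdvd
      exact hdvd
    obtain ⟨i, hi⟩ := hexists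
    rw [Finset.mem_biUnion]
    refine ⟨i, Finset.mem_univ i, ?_⟩
    rw [hT, Finset.mem_filter]
    refine ⟨hxbox, ?_⟩
    by_contra hninj
    obtain ⟨j, k, hjk, hne⟩ := Function.not_injective_iff.mp hninj
    have hdvd : ((ϖ i : ℕ):ℤ) ∣ x k - x j :=
      Int.ModEq.dvd ((ZMod.intCast_eq_intCast_iff _ _ _).mp hjk)
    obtain ⟨d, hd⟩ := hdvd
    set w : Fin n → ℤ := fun l => if l = k then d else 0 with hw
    set v : Fin n → ℤ := fun l => if l = k then x j else x l with hv
    have hxv : v + ((ϖ i : ℕ):ℤ) • w = x := by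
      funext l
      simp only [Pi.add_apply, Pi.smul_apply, smul_eq_mul, hv, hw]
      by_cases hl : l = k
      · subst hl; rw [if_pos rfl, if_pos rfl]; linarith [hd]
      · simp [hl]
    have hvj : v j = x j := by simp [hv, hne]
    have hvk : v k = x j := by simp [hv]
    have hv0 : f v = 0 := hskew v (fun hvinj => hne (hvinj (hvj.trans hvk.symm)))
    have hmod := hper i v w
    rw [hxv, hv0] at hmod
    exact hi (Int.modEq_zero_iff_dvd.mp hmod)
  have hdvdW : ∀ i, ϖ i ∣ W := fun i => Finset.dvd_prod_of_mem ϖ (Finset.mem_univ i)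
  -- counting each T i
  have hTcard : ∀ i, (T i).card ≤ (W / ϖ i)^n * (ϖ i).descFactorial n := by
    intro i
    haveI : NeZero (ϖ i) := ⟨Nat.one_le_iff_ne_zero.mp (hϖ i)⟩
    set π : (Fin n → ℤ) → (Fin n → ZMod (ϖ i)) := fun x j => ((x j : ZMod (ϖ i)))
      with hπ
    have hϖZ : (0:ℤ) < (ϖ i : ℤ) := by exact_mod_cast hϖ i
    have h1 : (T i).card ≤ (W / ϖ i)^n * ((T i).image π).card := by
      apply Finset.card_le_mul_card_image
      intro b _
      calc ((T i).filter (fun x => π x = b)).card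
          ≤ (Fintype.piFinset fun _ : Fin n =>
              Finset.Ico (0:ℤ) ((W / ϖ i : ℕ):ℤ)).card := by
            apply Finset.card_le_card_of_injOn (fun x j => x j / (ϖ i : ℤ))
            · intro x hx
              rw [Finset.mem_coe, Finset.mem_filter, hT, Finset.mem_filter, hbox,
                Fintype.mem_piFinset] at hx
              rw [Finset.mem_coe, Fintype.mem_piFinset]
              intro j
              have hj := hx.1.1 j
              rw [Finset.mem_Ico] at hj ⊢
              constructor
              · exact Int.ediv_nonneg hj.1 hϖZ.le
              · rw [Int.ediv_lt_iff_lt_mul hϖZ]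
                calc x j < (W:ℤ) := hj.2
                  _ = ((W / ϖ i : ℕ):ℤ) * (ϖ i : ℤ) := by
                    rw [← Nat.cast_mul, Nat.div_mul_cancel (hdvdW i)]
            · intro x hx y hy hxy
              simp only [Finset.coe_filter, Set.mem_setOf_eq] at hx hy
              funext j
              have hres : x j % (ϖ i : ℤ) = y j % (ϖ i : ℤ) := by
                have e1 : ((x j : ZMod (ϖ i))) = ((y j : ZMod (ϖ i))) := by
                  have := hx.2.trans hy.2.symm
                  exact congrFun this j
                exact (ZMod.intCast_eq_intCast_iff _ _ _).mp e1
              have hdiv : x j / (ϖ i : ℤ) = y j / (ϖ i : ℤ) := congrFun hxy j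
              calc x j = (ϖ i : ℤ) * (x j / (ϖ i : ℤ)) + x j % (ϖ i : ℤ) :=
                    (Int.mul_ediv_add_emod _ _).symm
                _ = (ϖ i : ℤ) * (y j / (ϖ i : ℤ)) + y j % (ϖ i : ℤ) := by
                    rw [hdiv, hres]
                _ = y j := Int.mul_ediv_add_emod _ _
        _ = (W / ϖ i)^n := by
            rw [Fintype.card_piFinset]
            simp only [Int.card_Ico, sub_zero, Int.toNat_natCast, Finset.prod_const,
              Finset.card_univ, Fintype.card_fin]
    have h2 : ((T i).image π).card ≤ (ϖ i).descFactorial n := by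
      rw [← aux_card_inj n (ϖ i)]
      apply Finset.card_le_card
      intro g hg
      rw [Finset.mem_image] at hg
      obtain ⟨x, hx, rfl⟩ := hg
      rw [Finset.mem_filter]
      exact ⟨Finset.mem_univ _, (Finset.mem_filter.mp hx).2⟩
    exact h1.trans (Nat.mul_le_mul_left _ h2)
  have hsum : S.card ≤ ∑ i, (W / ϖ i)^n * (ϖ i).descFactorial n :=
    (Finset.card_le_card hsub).trans
      (Finset.card_biUnion_le.trans (Finset.sum_le_sum fun i _ => hTcard i))
  -- real estimates
  have hWR : (0:ℝ) < (W:ℝ) := by exact_mod_cast hW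
  have hterm : ∀ i, (((W / ϖ i)^n * (ϖ i).descFactorial n : ℕ):ℝ) / (W:ℝ)^n
      ≤ Real.exp (-(n:ℝ)^2 / (4 * (M:ℝ))) := by
    intro i
    have hϖpos : (0:ℝ) < (ϖ i : ℝ) := by exact_mod_cast hϖ i
    have hQ : ((W / ϖ i : ℕ):ℝ) = (W:ℝ) / (ϖ i : ℝ) :=
      Nat.cast_div (hdvdW i) hϖpos.ne'
    have step1 : (((W / ϖ i)^n * (ϖ i).descFactorial n : ℕ):ℝ) / (W:ℝ)^n
        = ((ϖ i).descFactorial n : ℝ) / (ϖ i : ℝ)^n := by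
      push_cast
      rw [hQ, div_pow]
      field_simp
    rw [step1]
    have h2 := aux_descFactorial_le n (ϖ i) (hϖ i)
    have h3 : ((ϖ i).descFactorial n : ℝ) / (ϖ i : ℝ)^n
        ≤ Real.exp (-(∑ k ∈ Finset.range n, (k:ℝ)) / (ϖ i : ℝ)) := by
      rw [div_le_iff₀ (by positivity)]
      linarith [h2]
    refine h3.trans ?_
    apply Real.exp_le_exp.mpr
    have hle : (ϖ i : ℝ) ≤ (M:ℝ) := by
      exact_mod_cast Finset.le_sup (Finset.mem_univ i)
    have hMpos : (0:ℝ) < (M:ℝ) := lt_of_lt_of_le hϖpos hle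
    have hsumk : (∑ k ∈ Finset.range n, (k:ℝ)) = (n:ℝ) * ((n:ℝ) - 1) / 2 := by
      have := Finset.sum_range_id_mul_two n
      have h4 : ((∑ i ∈ Finset.range n, i : ℕ):ℝ) * 2 = (n:ℝ) * ((n:ℝ) - 1) := by
        rw [← Nat.cast_ofNat, ← Nat.cast_mul, this]
        push_cast [Nat.cast_sub (by omega : 1 ≤ n)]
        ring
      push_cast at h4
      linarith
    rw [neg_div, neg_div, neg_le_neg_iff, div_le_div_iff₀ (by positivity) hϖpos,
      hsumk]
    have hn2 : (2:ℝ) ≤ (n:ℝ) := by exact_mod_cast hn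
    have e1 : (n:ℝ)^2 * (ϖ i : ℝ) ≤ (n:ℝ)^2 * (M:ℝ) :=
      mul_le_mul_of_nonneg_left hle (by positivity)
    have e2 : (n:ℝ)^2 * (M:ℝ) ≤ ((n:ℝ) * ((n:ℝ) - 1) / 2) * (4 * (M:ℝ)) := by
      nlinarith [mul_le_mul_of_nonneg_right (by linarith : (n:ℝ) ≤ 2 * ((n:ℝ) - 1))
        (by positivity : (0:ℝ) ≤ (n:ℝ) * (M:ℝ))]
    linarith
  calc (S.card:ℝ) / (W:ℝ)^n
      ≤ ((∑ i, (W / ϖ i)^n * (ϖ i).descFactorial n : ℕ):ℝ) / (W:ℝ)^n := by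
        gcongr
    _ = ∑ i, (((W / ϖ i)^n * (ϖ i).descFactorial n : ℕ):ℝ) / (W:ℝ)^n := by
        rw [Nat.cast_sum, Finset.sum_div]
    _ ≤ ∑ _i : Fin r, Real.exp (-(n:ℝ)^2 / (4 * (M:ℝ))) :=
        Finset.sum_le_sum fun i _ => hterm i
    _ = (r : ℝ) * Real.exp (-(n:ℝ)^2 / (4 * (M:ℝ))) := by
        rw [Finset.sum_const, Finset.card_univ, Fintype.card_fin, nsmul_eq_mul]
end

section
/- Let L be a lattice of rank n, L' a full-rank sublattice, A a periodic subset of L, and A' = A ∩ L'. Then the density of A' in L' is at most [L : L'] times the density of A in L. -/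
open Finset

section aux

variable {n : ℕ} {L : Type*} [AddCommGroup L] [Module ℤ L]

lemma repr_equivFun_symm (B : Module.Basis (Fin n) ℤ L) (f : Fin n → ℤ) (i : Fin n) :
    B.repr (B.equivFun.symm f) i = f i := by
  have := congrFun (B.equivFun.apply_symm_apply f) i
  rwa [Module.Basis.equivFun_apply] at this

/-- Lift a vector of residues mod `p` to the lattice point with coordinates `val`. -/
noncomputable def psiB (B : Module.Basis (Fin n) ℤ L) (p : ℕ) (v : Fin n → ZMod p) : L :=
  B.equivFun.symm (fun i => ((v i).val : ℤ))

/-- Reduce a lattice point to its coordinate vector mod `p`. -/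
noncomputable def piB (B : Module.Basis (Fin n) ℤ L) (p : ℕ) (y : L) : Fin n → ZMod p :=
  fun i => ((B.repr y i : ℤ) : ZMod p)

lemma repr_psiB (B : Module.Basis (Fin n) ℤ L) (p : ℕ) (v : Fin n → ZMod p) (i : Fin n) :
    B.repr (psiB B p v) i = ((v i).val : ℤ) :=
  repr_equivFun_symm B _ i

lemma piB_psiB (B : Module.Basis (Fin n) ℤ L) (p : ℕ) [NeZero p] (v : Fin n → ZMod p) :
    piB B p (psiB B p v) = v := by
  funext i
  simp [piB, repr_psiB, ZMod.natCast_val, ZMod.cast_id]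

lemma mem_iff_psiB_piB (B : Module.Basis (Fin n) ℤ L) (p : ℕ) [NeZero p] (A : Set L)
    (hA : ∀ (a : L) (v : L), a ∈ A ↔ a + (p : ℤ) • v ∈ A) (y : L) :
    y ∈ A ↔ psiB B p (piB B p y) ∈ A := by
  have hdvd : ∀ i, (p : ℤ) ∣ (((piB B p y i).val : ℤ) - B.repr y i) := by
    intro i
    rw [← ZMod.intCast_zmod_eq_zero_iff_dvd]
    push_cast
    rw [ZMod.natCast_val, ZMod.cast_id]
    simp [piB, sub_eq_zero]
  set w : L := B.equivFun.symm (fun i => (((piB B p y i).val : ℤ) - B.repr y i) / p) with hw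
  have hkey : psiB B p (piB B p y) = y + (p : ℤ) • w := by
    apply B.ext_elem
    intro i
    have h2 : B.repr (y + (p : ℤ) • w) i = B.repr y i + p * B.repr w i := by simp
    rw [repr_psiB, h2, hw, repr_equivFun_symm, Int.mul_ediv_cancel' (hdvd i)]
    ring
  rw [hkey]
  exact hA y w

end aux

section aux2

variable {n : ℕ} {L : Type*} [AddCommGroup L] [Module ℤ L]

lemma psiB_piB_of_box (B : Module.Basis (Fin n) ℤ L) (p : ℕ) [NeZero p] (y : L)
    (hy : ∀ i, 0 ≤ B.repr y i ∧ B.repr y i < (p : ℤ)) :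
    psiB B p (piB B p y) = y := by
  apply B.ext_elem
  intro i
  rw [repr_psiB]
  have h0 := (hy i).1
  have h1 := (hy i).2
  have h2 : (B.repr y i).toNat < p := by omega
  have h3 : piB B p y i = (((B.repr y i).toNat : ℕ) : ZMod p) := by
    show ((B.repr y i : ℤ) : ZMod p) = _
    conv_lhs => rw [← Int.toNat_of_nonneg h0]
    rw [Int.cast_natCast]
  rw [h3, ZMod.val_cast_of_lt h2, Int.toNat_of_nonneg h0]

lemma card_box (B : Module.Basis (Fin n) ℤ L) (p : ℕ) [NeZero p] (Q : L → Prop) :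
    Nat.card {y : L | (∀ i, 0 ≤ B.repr y i ∧ B.repr y i < (p : ℤ)) ∧ Q y} =
    Nat.card {v : Fin n → ZMod p | Q (psiB B p v)} := by
  apply Nat.card_congr
  refine ⟨fun y => ⟨piB B p y.1, ?_⟩, fun v => ⟨psiB B p v.1, ?_, ?_⟩, ?_, ?_⟩
  · rw [Set.mem_setOf_eq, psiB_piB_of_box B p y.1 y.2.1]
    exact y.2.2
  · intro i
    rw [repr_psiB]
    exact ⟨Int.ofNat_nonneg _, by exact_mod_cast (v.1 i).val_lt⟩
  · exact v.2
  · intro y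
    exact Subtype.ext (psiB_piB_of_box B p y.1 y.2.1)
  · intro v
    exact Subtype.ext (piB_psiB B p v.1)

end aux2


section split

/-- Splitting `ZMod (p * t)` into residue mod `p` and quotient digit. -/
def zsplit (p t : ℕ) [NeZero p] [NeZero t] : ZMod (p * t) ≃ ZMod p × Fin t where
  toFun x := ((x.val : ZMod p), ⟨x.val / p, by
    have hx : x.val < p * t := x.val_lt
    have hp : 0 < p := Nat.pos_of_ne_zero (NeZero.ne p)
    exact Nat.div_lt_of_lt_mul (by omega)⟩)
  invFun y := ((y.1.val + p * y.2.1 : ℕ) : ZMod (p * t))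
  left_inv x := by
    show (((x.val : ZMod p).val + p * (x.val / p) : ℕ) : ZMod (p * t)) = x
    rw [ZMod.val_natCast, Nat.mod_add_div]
    simp [ZMod.natCast_val, ZMod.cast_id]
  right_inv y := by
    have hp : 0 < p := Nat.pos_of_ne_zero (NeZero.ne p)
    have hlt : y.1.val + p * y.2.1 < p * t := by
      have h1 : y.1.val < p := y.1.val_lt
      have h2 : y.2.1 < t := y.2.2
      calc y.1.val + p * y.2.1 < p + p * y.2.1 := by omega
        _ = p * (y.2.1 + 1) := by ring
        _ ≤ p * t := Nat.mul_le_mul_left p (by omega)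
    have hval : ((y.1.val + p * y.2.1 : ℕ) : ZMod (p * t)).val = y.1.val + p * y.2.1 :=
      ZMod.val_cast_of_lt hlt
    have c1 : ((((y.1.val + p * y.2.1 : ℕ) : ZMod (p * t)).val : ℕ) : ZMod p) = y.1 := by
      rw [hval]
      push_cast
      simp [ZMod.natCast_val, ZMod.cast_id]
    have c2 : (((y.1.val + p * y.2.1 : ℕ) : ZMod (p * t)).val) / p = y.2.1 := by
      rw [hval, Nat.add_mul_div_left _ _ hp, Nat.div_eq_of_lt y.1.val_lt]
      omega
    exact Prod.ext c1 (Fin.ext c2)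

lemma zsplit_fst (p t : ℕ) [NeZero p] [NeZero t] (x : ZMod (p * t)) :
    (zsplit p t x).1 = (x.val : ZMod p) := rfl

lemma card_comp (p t n : ℕ) [NeZero p] [NeZero t] (C : (Fin n → ZMod p) → Prop) :
    Nat.card {v : Fin n → ZMod (p * t) | C (fun i => ((v i).val : ZMod p))} =
      t ^ n * Nat.card {a : Fin n → ZMod p | C a} := by
  have key : ∀ (a : Fin n → ZMod p) (b : Fin n → Fin t),
      (fun i => ((((zsplit p t).symm (a i, b i)).val : ℕ) : ZMod p)) = a := by
    intro a b
    funext i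
    rw [← zsplit_fst p t, (zsplit p t).apply_symm_apply]
  have E : ↥{v : Fin n → ZMod (p * t) | C (fun i => ((v i).val : ZMod p))} ≃
      (↥{a : Fin n → ZMod p | C a} × (Fin n → Fin t)) :=
  { toFun := fun v => (⟨fun i => ((v.1 i).val : ZMod p), v.2⟩, fun i => (zsplit p t (v.1 i)).2),
    invFun := fun w => ⟨fun i => (zsplit p t).symm (w.1.1 i, w.2 i), by
      have := w.1.2
      rw [Set.mem_setOf_eq]
      rw [key w.1.1 w.2]
      exact this⟩,
    left_inv := fun v => by
      apply Subtype.ext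
      funext i
      show (zsplit p t).symm (((v.1 i).val : ZMod p), (zsplit p t (v.1 i)).2) = v.1 i
      exact (zsplit p t).symm_apply_apply _,
    right_inv := fun w => by
      refine Prod.ext (Subtype.ext ?_) ?_
      · exact key w.1.1 w.2
      · funext i
        show (zsplit p t ((zsplit p t).symm (w.1.1 i, w.2 i))).2 = w.2 i
        rw [(zsplit p t).apply_symm_apply] }
  rw [Nat.card_congr E, Nat.card_prod]
  simp [Nat.card_eq_fintype_card, mul_comm]

end split

section refine

variable {n : ℕ} {L : Type*} [AddCommGroup L] [Module ℤ L]

lemma card_refine (B : Module.Basis (Fin n) ℤ L) (p t m : ℕ) [NeZero p] [NeZero t] (hm : m = p * t)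
    (A : Set L) (hA : ∀ y : L, y ∈ A ↔ psiB B p (piB B p y) ∈ A) :
    Nat.card {v : Fin n → ZMod m | psiB B m v ∈ A}
      = t ^ n * Nat.card {v : Fin n → ZMod p | psiB B p v ∈ A} := by
  subst hm
  have hset : {v : Fin n → ZMod (p * t) | psiB B (p * t) v ∈ A}
      = {v : Fin n → ZMod (p * t) | psiB B p (fun i => ((v i).val : ZMod p)) ∈ A} := by
    ext v
    rw [Set.mem_setOf_eq, Set.mem_setOf_eq, hA (psiB B (p * t) v)]
    have hpi : piB B p (psiB B (p * t) v) = fun i => ((v i).val : ZMod p) := by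
      funext i
      show ((B.repr (psiB B (p * t) v) i : ℤ) : ZMod p) = _
      rw [repr_psiB, Int.cast_natCast]
    rw [hpi]
  rw [hset]
  exact card_comp p t n (fun a => psiB B p a ∈ A)

end refine

section fiber

variable {n : ℕ} {L : Type*} [AddCommGroup L] [Module ℤ L]

lemma card_le_index (B : Module.Basis (Fin n) ℤ L) (L' : Submodule ℤ L) (B' : Module.Basis (Fin n) ℤ L')
    (hfin : L'.toAddSubgroup.FiniteIndex) (m : ℕ) [NeZero m] (A : Set L)
    (hAm : ∀ y : L, y ∈ A ↔ psiB B m (piB B m y) ∈ A) :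
    Nat.card {v : Fin n → ZMod m | ((psiB B' m v : L') : L) ∈ A}
      ≤ L'.toAddSubgroup.index * Nat.card {v : Fin n → ZMod m | psiB B m v ∈ A} := by
  classical
  haveI := hfin
  haveI : Fintype (L ⧸ L'.toAddSubgroup) := Fintype.ofFinite _
  set k := L'.toAddSubgroup.index with hk
  rw [Nat.card_eq_fintype_card, Nat.card_eq_fintype_card, Fintype.card_subtype,
    Fintype.card_subtype]
  set f : (Fin n → ZMod m) → (Fin n → ZMod m) := fun v => piB B m ((psiB B' m v : L') : L)
    with hf
  set s : Finset (Fin n → ZMod m) :=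
    Finset.univ.filter (fun v => v ∈ {v : Fin n → ZMod m | ((psiB B' m v : L') : L) ∈ A})
    with hs
  -- the quotient map used to bound fibers
  set g : (Fin n → ZMod m) → (Fin n → ZMod m) → L ⧸ L'.toAddSubgroup := fun a v =>
    QuotientAddGroup.mk
      (B.equivFun.symm (fun i => B.repr (((psiB B' m v : L') : L) - psiB B m a) i / m))
    with hg
  have hfiber : ∀ a ∈ s.image f, (s.filter (fun v => f v = a)).card ≤ k := by
    intro a _
    set T := s.filter (fun v => f v = a) with hT
    -- on the fiber, the division recovers an exact smul decomposition
    have hsmul : ∀ v ∈ T, (m : ℤ) •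
        (B.equivFun.symm (fun i => B.repr (((psiB B' m v : L') : L) - psiB B m a) i / m))
        = ((psiB B' m v : L') : L) - psiB B m a := by
      intro v hv
      rw [hT, Finset.mem_filter] at hv
      have hfv : piB B m ((psiB B' m v : L') : L) = a := hv.2
      have hdvd : ∀ i, (m : ℤ) ∣ B.repr (((psiB B' m v : L') : L) - psiB B m a) i := by
        intro i
        rw [← ZMod.intCast_zmod_eq_zero_iff_dvd]
        have hrs : B.repr (((psiB B' m v : L') : L) - psiB B m a) i
            = B.repr ((psiB B' m v : L') : L) i - B.repr (psiB B m a) i := by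
          simp [map_sub]
        rw [hrs]
        have e1 : ((B.repr ((psiB B' m v : L') : L) i : ℤ) : ZMod m) = a i := congrFun hfv i
        have e2 : ((B.repr (psiB B m a) i : ℤ) : ZMod m) = a i := congrFun (piB_psiB B m a) i
        push_cast
        rw [e1, e2, sub_self]
      apply B.ext_elem
      intro i
      have hsm : ∀ (w : L), B.repr ((m : ℤ) • w) i = m * B.repr w i := by
        intro w; simp
      rw [hsm, repr_equivFun_symm, Int.mul_ediv_cancel' (hdvd i)]
    -- injectivity of g a on the fiber
    have hinj : Set.InjOn (g a) T := by
      intro v1 h1 v2 h2 heq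
      rw [hg] at heq
      rw [QuotientAddGroup.eq] at heq
      set u1 := B.equivFun.symm
        (fun i => B.repr (((psiB B' m v1 : L') : L) - psiB B m a) i / m) with hu1
      set u2 := B.equivFun.symm
        (fun i => B.repr (((psiB B' m v2 : L') : L) - psiB B m a) i / m) with hu2
      have hmem : -u1 + u2 ∈ L' := heq
      have keyL : ((psiB B' m v2 - psiB B' m v1 : L') : L)
          = (((m : ℤ) • (⟨-u1 + u2, hmem⟩ : L') : L') : L) := by
        push_cast
        have d1 := hsmul v1 h1
        have d2 := hsmul v2 h2
        rw [← hu1] at d1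
        rw [← hu2] at d2
        have hsm2 : (m : ℤ) • (-u1 + u2) = (m : ℤ) • u2 - (m : ℤ) • u1 := by
          rw [neg_add_eq_sub]; exact zsmul_sub u2 u1 (m : ℤ)
        rw [hsm2, d1, d2]
        abel
      have keyL' : psiB B' m v2 - psiB B' m v1 = (m : ℤ) • (⟨-u1 + u2, hmem⟩ : L') :=
        Subtype.coe_injective keyL
      have hpieq : piB B' m (psiB B' m v2) = piB B' m (psiB B' m v1) := by
        funext i
        show ((B'.repr (psiB B' m v2) i : ℤ) : ZMod m) = ((B'.repr (psiB B' m v1) i : ℤ) : ZMod m)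
        have hr : B'.repr (psiB B' m v2) i - B'.repr (psiB B' m v1) i
            = m * B'.repr (⟨-u1 + u2, hmem⟩ : L') i := by
          have ha1 : B'.repr (psiB B' m v2 - psiB B' m v1) i
              = B'.repr (psiB B' m v2) i - B'.repr (psiB B' m v1) i := by simp [map_sub]
          have ha2 : ∀ w : L', B'.repr ((m : ℤ) • w) i = m * B'.repr w i := fun w => by
            rw [LinearEquiv.map_smul, Finsupp.smul_apply, smul_eq_mul]
          rw [← ha1, keyL', ha2]
        have hz : ((B'.repr (psiB B' m v2) i - B'.repr (psiB B' m v1) i : ℤ) : ZMod m) = 0 := by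
          rw [hr]; push_cast; simp
        rw [Int.cast_sub, sub_eq_zero] at hz
        exact hz
      rw [piB_psiB, piB_psiB] at hpieq
      exact hpieq.symm
    calc T.card ≤ Finset.univ.card := Finset.card_le_card_of_injOn (g a)
          (fun _ _ => Finset.mem_univ _) hinj
      _ = Fintype.card (L ⧸ L'.toAddSubgroup) := Finset.card_univ
      _ = Nat.card (L ⧸ L'.toAddSubgroup) := Nat.card_eq_fintype_card.symm
      _ = k := (AddSubgroup.index_eq_card _).symm
  have hmain := Finset.card_le_mul_card_image (f := f) s k hfiber
  refine le_trans hmain (Nat.mul_le_mul_left k ?_)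
  apply Finset.card_le_card
  intro a ha
  rw [Finset.mem_image] at ha
  obtain ⟨v, hv, rfl⟩ := ha
  rw [hs, Finset.mem_filter] at hv
  rw [Finset.mem_filter]
  exact ⟨Finset.mem_univ _, (hAm _).mp hv.2⟩

end fiber

/-- If `L'` is a full-rank sublattice of a lattice `L` of rank `n`, `A` is a periodic
subset of `L` (with period `ϖ`), and `A' = A ∩ L'` (which is periodic in `L'` with
period `ϖ'`), then the density of `A'` in `L'` is at most `[L : L']` times the density
of `A` in `L`. Densities are computed on fundamental boxes built from bases. -/
theorem stmt_17 (n : ℕ) (L : Type*) [AddCommGroup L] [Module ℤ L]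
    (B : Module.Basis (Fin n) ℤ L) (L' : Submodule ℤ L) (B' : Module.Basis (Fin n) ℤ L')
    (hfin : L'.toAddSubgroup.FiniteIndex)
    (A : Set L) (ϖ ϖ' : ℕ) (hϖ : 1 ≤ ϖ) (hϖ' : 1 ≤ ϖ')
    (hA : ∀ (a : L) (v : L), a ∈ A ↔ a + (ϖ : ℤ) • v ∈ A)
    (hA' : ∀ (a : L') (v : L'), (a : L) ∈ A ↔ ((a + (ϖ' : ℤ) • v : L') : L) ∈ A) :
    (Nat.card {y : L' | (∀ i, 0 ≤ B'.repr y i ∧ B'.repr y i < ϖ') ∧ (y : L) ∈ A} : ℚ)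
        / (ϖ' : ℚ) ^ n
      ≤ (L'.toAddSubgroup.index : ℚ) *
        ((Nat.card ({y : L | ∀ i, 0 ≤ B.repr y i ∧ B.repr y i < ϖ} ∩ A : Set L) : ℚ)
          / (ϖ : ℚ) ^ n) := by
  classical
  haveI : NeZero ϖ := ⟨by omega⟩
  haveI : NeZero ϖ' := ⟨by omega⟩
  set k := L'.toAddSubgroup.index with hk
  have hk0 : k ≠ 0 := hfin.index_ne_zero
  haveI : NeZero k := ⟨hk0⟩
  set m := ϖ * ϖ' * k with hm
  have hm0 : m ≠ 0 := by positivity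
  haveI : NeZero m := ⟨hm0⟩
  haveI : NeZero (ϖ * k) := ⟨by positivity⟩
  haveI : NeZero (ϖ' * k) := ⟨by positivity⟩
  set A'' : Set L' := {y : L' | (y : L) ∈ A} with hA''def
  -- periodicity of `A` with period `m`
  have hAm_per : ∀ (a v : L), a ∈ A ↔ a + (m : ℤ) • v ∈ A := by
    intro a v
    have hcast : ((m : ℕ) : ℤ) = (ϖ : ℤ) * ((ϖ' * k : ℕ) : ℤ) := by
      rw [hm]; push_cast; ring
    rw [hcast, mul_zsmul]
    exact hA a _
  have hAm : ∀ y : L, y ∈ A ↔ psiB B m (piB B m y) ∈ A := mem_iff_psiB_piB B m A hAm_per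
  have hAϖ : ∀ y : L, y ∈ A ↔ psiB B ϖ (piB B ϖ y) ∈ A := mem_iff_psiB_piB B ϖ A hA
  -- periodicity of `A''` with period `ϖ'`
  have hA''per : ∀ (a v : L'), a ∈ A'' ↔ a + (ϖ' : ℤ) • v ∈ A'' := fun a v => hA' a v
  have hA''ϖ' : ∀ y : L', y ∈ A'' ↔ psiB B' ϖ' (piB B' ϖ' y) ∈ A'' :=
    mem_iff_psiB_piB B' ϖ' A'' hA''per
  -- identify box counts with pattern counts
  have hbox' : Nat.card {y : L' | (∀ i, 0 ≤ B'.repr y i ∧ B'.repr y i < ϖ') ∧ (y : L) ∈ A}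
      = Nat.card {v : Fin n → ZMod ϖ' | ((psiB B' ϖ' v : L') : L) ∈ A} :=
    card_box B' ϖ' (fun y => (y : L) ∈ A)
  have hboxL : Nat.card ({y : L | ∀ i, 0 ≤ B.repr y i ∧ B.repr y i < ϖ} ∩ A : Set L)
      = Nat.card {v : Fin n → ZMod ϖ | psiB B ϖ v ∈ A} :=
    card_box B ϖ (fun y => y ∈ A)
  -- refinements to the common period m
  have h1 : Nat.card {v : Fin n → ZMod m | ((psiB B' m v : L') : L) ∈ A}
      = (ϖ * k) ^ n * Nat.card {v : Fin n → ZMod ϖ' | ((psiB B' ϖ' v : L') : L) ∈ A} :=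
    card_refine B' ϖ' (ϖ * k) m (by rw [hm]; ring) A'' hA''ϖ'
  have h2 : Nat.card {v : Fin n → ZMod m | psiB B m v ∈ A}
      = (ϖ' * k) ^ n * Nat.card {v : Fin n → ZMod ϖ | psiB B ϖ v ∈ A} :=
    card_refine B ϖ (ϖ' * k) m (by rw [hm]; ring) A hAϖ
  -- the fiber bound
  have h3 : Nat.card {v : Fin n → ZMod m | ((psiB B' m v : L') : L) ∈ A}
      ≤ k * Nat.card {v : Fin n → ZMod m | psiB B m v ∈ A} :=
    card_le_index B L' B' hfin m A hAm
  rw [hbox', hboxL]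
  set N' := Nat.card {v : Fin n → ZMod ϖ' | ((psiB B' ϖ' v : L') : L) ∈ A} with hN'
  set N := Nat.card {v : Fin n → ZMod ϖ | psiB B ϖ v ∈ A} with hN
  have hineq : (ϖ * k) ^ n * N' ≤ k * ((ϖ' * k) ^ n * N) := by
    rw [← h1, ← h2]; exact h3
  have hcancel : ϖ ^ n * N' ≤ k * (ϖ' ^ n * N) := by
    rw [mul_pow, mul_pow] at hineq
    have hkn : 0 < k ^ n := pow_pos (Nat.pos_of_ne_zero hk0) n
    have e1 : (ϖ ^ n * N') * k ^ n = ϖ ^ n * k ^ n * N' := by ring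
    have e2 : (k * (ϖ' ^ n * N)) * k ^ n = k * (ϖ' ^ n * k ^ n * N) := by ring
    exact Nat.le_of_mul_le_mul_right (by rw [e1, e2]; exact hineq) hkn
  have hq : (ϖ : ℚ) ^ n * N' ≤ (k : ℚ) * ((ϖ' : ℚ) ^ n * N) := by exact_mod_cast hcancel
  have hp1 : (0 : ℚ) < (ϖ' : ℚ) ^ n := by
    have : (0 : ℚ) < (ϖ' : ℚ) := by exact_mod_cast hϖ'
    positivity
  have hp2 : (0 : ℚ) < (ϖ : ℚ) ^ n := by
    have : (0 : ℚ) < (ϖ : ℚ) := by exact_mod_cast hϖ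
    positivity
  rw [← mul_div_assoc, div_le_div_iff₀ hp1 hp2]
  calc (N' : ℚ) * (ϖ : ℚ) ^ n = (ϖ : ℚ) ^ n * N' := by ring
    _ ≤ (k : ℚ) * ((ϖ' : ℚ) ^ n * N) := hq
    _ = (k : ℚ) * N * (ϖ' : ℚ) ^ n := by ring
end

section
/- Let V = ℝⁿ with lattice ℤⁿ, let N be any norm on V, let ϖ ≥ 1, let A ⊆ ℤⁿ be ϖ-periodic, and let F = {0,…,ϖ−1}ⁿ. Then the limit as r → ∞ of #{a ∈ A : N(a) < r} / #{v ∈ ℤⁿ : N(v) < r} exists and equals |F ∩ A|/ϖⁿ. -/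
open Filter MeasureTheory Pointwise
open scoped ENNReal Classical

namespace Stmt18

variable {n : ℕ} {N : (Fin n → ℝ) → ℝ}

section basic
variable (hNadd : ∀ x y, N (x + y) ≤ N x + N y)
    (hNsmul : ∀ (c : ℝ) (x), N (c • x) = |c| * N x)

include hNsmul

lemma N0 : N 0 = 0 := by
  have h := hNsmul 0 0
  simpa using h

lemma Nneg (x) : N (-x) = N x := by
  have h := hNsmul (-1) x
  simpa using h

include hNadd

lemma Nnonneg (x) : 0 ≤ N x := by
  have h := hNadd x (-x)
  rw [add_neg_cancel, N0 hNsmul, Nneg hNsmul] at h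
  linarith

omit hNsmul in
lemma Nsub (x y) : N x - N y ≤ N (x - y) := by
  have h := hNadd (x - y) y
  simp only [sub_add_cancel] at h
  linarith

lemma Nsum {ι : Type*} (s : Finset ι) (g : ι → (Fin n → ℝ)) :
    N (∑ i ∈ s, g i) ≤ ∑ i ∈ s, N (g i) := by
  classical
  induction s using Finset.induction with
  | empty => simp [N0 hNsmul]
  | insert _ _ h ih =>
    rw [Finset.sum_insert h, Finset.sum_insert h]
    exact le_trans (hNadd _ _) (by linarith)

/-- the constant `D` -/
noncomputable def D (N : (Fin n → ℝ) → ℝ) : ℝ := ∑ i, N (Pi.single i 1)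

lemma D_nonneg : 0 ≤ D N :=
  Finset.sum_nonneg fun i _ => Nnonneg hNadd hNsmul _

lemma N_le_of_abs_le {x : Fin n → ℝ} {t : ℝ} (ht : ∀ i, |x i| ≤ t) :
    N x ≤ t * D N := by
  have hx : x = ∑ i, x i • (Pi.single i 1 : Fin n → ℝ) := by
    funext j
    rw [Finset.sum_apply]
    simp [Pi.single_apply]
  calc N x = N (∑ i, x i • (Pi.single i 1 : Fin n → ℝ)) := by rw [← hx]
    _ ≤ ∑ i, N (x i • (Pi.single i 1 : Fin n → ℝ)) := Nsum hNadd hNsmul _ _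
    _ = ∑ i, |x i| * N (Pi.single i 1) := by simp [hNsmul]
    _ ≤ ∑ i, t * N (Pi.single i 1) := by
        refine Finset.sum_le_sum fun i _ => ?_
        exact mul_le_mul_of_nonneg_right (ht i) (Nnonneg hNadd hNsmul _)
    _ = t * D N := by rw [D, Finset.mul_sum]

lemma N_le_norm (x : Fin n → ℝ) : N x ≤ ‖x‖ * D N :=
  N_le_of_abs_le hNadd hNsmul fun i => by
    simpa using norm_le_pi_norm x i

lemma N_continuous : Continuous N := by
  rcases le_or_gt (D N) 0 with hD | hD
  · have h0 : ∀ x, N x = 0 := fun x =>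
      le_antisymm (le_trans (N_le_norm hNadd hNsmul x)
        (mul_nonpos_of_nonneg_of_nonpos (norm_nonneg x) hD)) (Nnonneg hNadd hNsmul x)
    rw [funext h0]; exact continuous_const
  · apply LipschitzWith.continuous (K := ⟨D N, hD.le⟩)
    apply LipschitzWith.of_dist_le_mul
    intro x y
    have h1 := Nsub hNadd x y
    have h2 := Nsub hNadd y x
    rw [show y - x = -(x - y) by ring, Nneg hNsmul] at h2
    have h3 : N (x - y) ≤ ‖x - y‖ * D N := N_le_norm hNadd hNsmul _
    rw [mul_comm] at h3
    have key : dist (N x) (N y) ≤ D N * dist x y := by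
      rw [Real.dist_eq, dist_eq_norm, abs_le]
      constructor <;> linarith
    exact key

end basic

section lower
variable (hN0 : ∀ x, N x = 0 → x = 0)
    (hNsmul : ∀ (c : ℝ) (x), N (c • x) = |c| * N x)
    (hcont : Continuous N) (hpos : ∀ x, 0 ≤ N x)

include hN0 hNsmul hcont hpos in
lemma N_lower : ∃ c : ℝ, 0 < c ∧ ∀ x, c * ‖x‖ ≤ N x := by
  rcases Nat.eq_zero_or_pos n with hn | hn
  · refine ⟨1, one_pos, fun x => ?_⟩
    subst hn
    have hx : x = 0 := Subsingleton.elim x 0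
    rw [hx, norm_zero, mul_zero]
    exact hpos 0
  · haveI : Nonempty (Fin n) := ⟨⟨0, hn⟩⟩
    obtain ⟨x₀, hx₀s, hx₀min⟩ :=
      (isCompact_sphere (0 : Fin n → ℝ) 1).exists_isMinOn
        (NormedSpace.sphere_nonempty.2 zero_le_one) hcont.continuousOn
    have hx₀ : ‖x₀‖ = 1 := by simpa using hx₀s
    have hm : 0 < N x₀ := by
      rcases (hpos x₀).lt_or_eq with h | h
      · exact h
      · exact absurd (hN0 x₀ h.symm) (by intro hh; rw [hh] at hx₀; simp at hx₀)
    refine ⟨N x₀, hm, fun x => ?_⟩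
    rcases eq_or_ne x 0 with rfl | hx
    · simp [hpos 0]
    · have hnx : ‖x‖ ≠ 0 := norm_ne_zero_iff.2 hx
      have hmem : (‖x‖⁻¹ • x) ∈ Metric.sphere (0 : Fin n → ℝ) 1 := by
        simp [norm_smul, abs_of_nonneg (inv_nonneg.2 (norm_nonneg x)),
          inv_mul_cancel₀ hnx]
      have h2 : N x₀ ≤ N (‖x‖⁻¹ • x) := hx₀min hmem
      rw [hNsmul] at h2
      rw [abs_of_nonneg (inv_nonneg.2 (norm_nonneg x))] at h2
      have h3 := mul_le_mul_of_nonneg_left h2 (norm_nonneg x)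
      rw [← mul_assoc, mul_inv_cancel₀ hnx, one_mul] at h3
      linarith [h3]
end lower

section vol
variable (hNadd : ∀ x y, N (x + y) ≤ N x + N y)
    (hNsmul : ∀ (c : ℝ) (x), N (c • x) = |c| * N x)
    (hcont : Continuous N)
    {c : ℝ} (hc : 0 < c) (hlow : ∀ x, c * ‖x‖ ≤ N x)

include hc hlow in
lemma finite_lat (r : ℝ) :
    {v : Fin n → ℤ | N (fun i => (v i : ℝ)) < r}.Finite := by
  set M : ℤ := ⌈r / c⌉ with hM
  apply Set.Finite.subset (Set.Finite.pi (fun i : Fin n => Set.finite_Icc (-M) M))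
  intro v hv
  simp only [Set.mem_setOf_eq] at hv
  have h1 : c * ‖(fun i => (v i : ℝ))‖ < r := lt_of_le_of_lt (hlow _) hv
  have h2 : ‖(fun i => (v i : ℝ))‖ ≤ r / c := by
    rw [le_div_iff₀ hc]; linarith [h1]
  intro i _
  have h3 : |(v i : ℝ)| ≤ r / c :=
    le_trans (by simpa using norm_le_pi_norm (fun i => (v i : ℝ)) i) h2
  have h4 : (|v i| : ℝ) ≤ (M : ℝ) := by
    rw [hM]
    exact le_trans h3 (Int.le_ceil _)
  have h5 : |v i| ≤ M := by exact_mod_cast h4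
  simp only [Set.mem_Icc]
  exact abs_le.1 h5

include hNsmul in
lemma ball_smul {s : ℝ} (hs : 0 < s) :
    N ⁻¹' (Set.Iio s) = s • (N ⁻¹' (Set.Iio 1)) := by
  ext x
  rw [Set.mem_smul_set_iff_inv_smul_mem₀ (ne_of_gt hs)]
  simp only [Set.mem_preimage, Set.mem_Iio, hNsmul, abs_of_pos (inv_pos.2 hs)]
  rw [inv_mul_lt_iff₀ hs, mul_one]

include hNsmul in
lemma ball_vol {s : ℝ} (hs : 0 < s) :
    volume (N ⁻¹' (Set.Iio s)) = ENNReal.ofReal (s ^ n) * volume (N ⁻¹' (Set.Iio 1)) := by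
  rw [ball_smul hNsmul hs, Measure.addHaar_smul_of_nonneg volume hs.le]
  simp

include hNsmul hcont in
lemma ball_vol_pos : 0 < volume (N ⁻¹' (Set.Iio 1)) := by
  apply (IsOpen.preimage hcont isOpen_Iio).measure_pos volume
  refine ⟨0, ?_⟩
  have h0 : N 0 = 0 := by simpa using hNsmul 0 0
  simp [h0]

include hc hlow in
lemma ball_vol_lt_top : volume (N ⁻¹' (Set.Iio 1)) < ⊤ := by
  apply lt_of_le_of_lt (measure_mono (?_ : _ ⊆ Metric.ball (0 : Fin n → ℝ) (1/c + 1)))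
  · exact measure_ball_lt_top
  · intro x hx
    simp only [Set.mem_preimage, Set.mem_Iio] at hx
    have := hlow x
    have hxc : ‖x‖ < 1 / c := by rw [lt_div_iff₀ hc]; nlinarith
    simp only [Metric.mem_ball, dist_zero_right]
    linarith
end vol

section cubes
variable (hNadd : ∀ x y, N (x + y) ≤ N x + N y)
    {D : ℝ} (hDb : ∀ x : Fin n → ℝ, (∀ i, |x i| ≤ 1) → N x ≤ D)

/-- cube at lattice point -/
def cube (v : Fin n → ℤ) : Set (Fin n → ℝ) :=
  Set.univ.pi (fun i => Set.Ico ((v i : ℝ)) (v i + 1))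

lemma cube_vol (v : Fin n → ℤ) : volume (cube v) = 1 := by
  rw [cube, volume_pi_pi]
  simp [Real.volume_Ico]

lemma cube_measurable (v : Fin n → ℤ) : MeasurableSet (cube v) :=
  MeasurableSet.univ_pi fun i => measurableSet_Ico

lemma mem_cube_iff (v : Fin n → ℤ) (x : Fin n → ℝ) :
    x ∈ cube v ↔ ∀ i, v i = ⌊x i⌋ := by
  simp only [cube, Set.mem_pi, Set.mem_univ, forall_true_left, Set.mem_Ico]
  refine forall_congr' fun i => ?_
  rw [eq_comm, Int.floor_eq_iff]

lemma cube_disjoint' {v w : Fin n → ℤ} (hvw : v ≠ w) : Disjoint (cube v) (cube w) := by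
  rw [Set.disjoint_left]
  intro x hx hx'
  rw [mem_cube_iff] at hx hx'
  exact hvw (funext fun i => (hx i).trans (hx' i).symm)

include hNadd hDb in
lemma count_le_vol (s : ℝ) (hfin : {v : Fin n → ℤ | N (fun i => (v i : ℝ)) < s}.Finite) :
    (Nat.card {v : Fin n → ℤ | N (fun i => (v i : ℝ)) < s} : ℝ≥0∞)
      ≤ volume (N ⁻¹' (Set.Iio (s + D))) := by
  classical
  have hsub : ∀ v ∈ hfin.toFinset, cube v ⊆ N ⁻¹' (Set.Iio (s + D)) := by
    intro v hv x hx
    rw [Set.Finite.mem_toFinset] at hv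
    simp only [Set.mem_setOf_eq] at hv
    rw [mem_cube_iff] at hx
    simp only [Set.mem_preimage, Set.mem_Iio]
    have h1 : N x ≤ N (fun i => (v i : ℝ)) + N (x - fun i => (v i : ℝ)) := by
      have := hNadd (fun i => (v i : ℝ)) (x - fun i => (v i : ℝ))
      simpa using this
    have h2 : N (x - fun i => (v i : ℝ)) ≤ D := by
      apply hDb
      intro i
      have := hx i
      have hfl := Int.floor_le (x i)
      have hlt := Int.lt_floor_add_one (x i)
      rw [← this] at hfl hlt
      simp only [Pi.sub_apply]
      rw [abs_le]
      constructor <;> linarith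
    linarith
  calc (Nat.card {v : Fin n → ℤ | N (fun i => (v i : ℝ)) < s} : ℝ≥0∞)
      = ∑ v ∈ hfin.toFinset, volume (cube v) := by
        simp only [cube_vol, Finset.sum_const, nsmul_eq_mul, mul_one]
        congr 1
        rw [Nat.card_coe_set_eq, Set.ncard_eq_toFinset_card _ hfin]
    _ = volume (⋃ v ∈ hfin.toFinset, cube v) := by
        rw [measure_biUnion_finset ?_ (fun v _ => cube_measurable v)]
        intro v hv w hw hvw
        exact cube_disjoint' hvw
    _ ≤ volume (N ⁻¹' (Set.Iio (s + D))) := by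
        apply measure_mono
        exact Set.iUnion₂_subset hsub

include hNadd hDb in
lemma vol_le_count (s : ℝ) (hfin : {v : Fin n → ℤ | N (fun i => (v i : ℝ)) < s}.Finite) :
    volume (N ⁻¹' (Set.Iio (s - D)))
      ≤ (Nat.card {v : Fin n → ℤ | N (fun i => (v i : ℝ)) < s} : ℝ≥0∞) := by
  classical
  have hsub : N ⁻¹' (Set.Iio (s - D)) ⊆ ⋃ v ∈ hfin.toFinset, cube v := by
    intro x hx
    simp only [Set.mem_preimage, Set.mem_Iio] at hx
    set v : Fin n → ℤ := fun i => ⌊x i⌋ with hv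
    have hxc : x ∈ cube v := by
      rw [mem_cube_iff]; intro i; rfl
    have hvS : v ∈ hfin.toFinset := by
      rw [Set.Finite.mem_toFinset]
      simp only [Set.mem_setOf_eq]
      have h1 : N (fun i => (v i : ℝ)) ≤ N x + N ((fun i => (v i : ℝ)) - x) := by
        have := hNadd x ((fun i => (v i : ℝ)) - x)
        simpa using this
      have h2 : N ((fun i => (v i : ℝ)) - x) ≤ D := by
        apply hDb
        intro i
        have hfl := Int.floor_le (x i)
        have hlt := Int.lt_floor_add_one (x i)
        simp only [Pi.sub_apply, hv]
        rw [abs_le]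
        constructor <;> linarith
      linarith
    exact Set.mem_biUnion hvS hxc
  calc volume (N ⁻¹' (Set.Iio (s - D))) ≤ volume (⋃ v ∈ hfin.toFinset, cube v) :=
        measure_mono hsub
    _ = ∑ v ∈ hfin.toFinset, volume (cube v) := by
        rw [measure_biUnion_finset ?_ (fun v _ => cube_measurable v)]
        intro v hv w hw hvw
        exact cube_disjoint' hvw
    _ = (Nat.card {v : Fin n → ℤ | N (fun i => (v i : ℝ)) < s} : ℝ≥0∞) := by
        simp only [cube_vol, Finset.sum_const, nsmul_eq_mul, mul_one]
        congr 1
        rw [Nat.card_coe_set_eq, Set.ncard_eq_toFinset_card _ hfin]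
end cubes

section residue
variable (hNadd : ∀ x y, N (x + y) ≤ N x + N y)
    (hNsmul : ∀ (c : ℝ) (x), N (c • x) = |c| * N x)
    {ϖ : ℕ} (hϖ : 1 ≤ ϖ) {A : Set (Fin n → ℤ)}
    (hA : ∀ (a : Fin n → ℤ) (v : Fin n → ℤ), a ∈ A ↔ a + (ϖ : ℤ) • v ∈ A)

noncomputable def Fs (n ϖ : ℕ) : Finset (Fin n → ℤ) := Fintype.piFinset (fun _ => Finset.Ico (0:ℤ) ϖ)

omit hNadd hNsmul hϖ hA in
lemma mem_Fs {x : Fin n → ℤ} : x ∈ Fs n ϖ ↔ ∀ i, 0 ≤ x i ∧ x i < ϖ := by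
  simp [Fs, Finset.mem_Ico]

omit hNadd hNsmul hϖ hA in
lemma card_Fs : (Fs n ϖ).card = ϖ ^ n := by
  simp [Fs, Int.card_Ico]

def ρ (ϖ : ℕ) (v : Fin n → ℤ) : Fin n → ℤ := fun i => v i % ϖ

def qt (ϖ : ℕ) (v : Fin n → ℤ) : Fin n → ℤ := fun i => v i / ϖ

omit hNadd hNsmul hA in
include hϖ in
lemma rho_mem_Fs (v : Fin n → ℤ) : ρ ϖ v ∈ Fs n ϖ := by
  rw [mem_Fs]; intro i
  have hϖ0 : (0:ℤ) < (ϖ:ℤ) := by exact_mod_cast hϖ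
  exact ⟨Int.emod_nonneg _ (by positivity), Int.emod_lt_of_pos _ hϖ0⟩

omit hNadd hNsmul hϖ hA in
lemma rho_add_qt (v : Fin n → ℤ) : ρ ϖ v + (ϖ:ℤ) • qt ϖ v = v := by
  funext i
  simp only [ρ, qt, Pi.add_apply, Pi.smul_apply, smul_eq_mul]
  exact Int.emod_add_mul_ediv _ _

omit hNadd hNsmul hϖ in
include hA in
lemma mem_A_iff_rho (v : Fin n → ℤ) : v ∈ A ↔ ρ ϖ v ∈ A := by
  conv_lhs => rw [← rho_add_qt (ϖ := ϖ) v]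
  exact (hA (ρ ϖ v) (qt ϖ v)).symm

omit hNadd hNsmul hϖ hA in
lemma rho_of_add {f : Fin n → ℤ} (hf : f ∈ Fs n ϖ) (q : Fin n → ℤ) :
    ρ ϖ (f + (ϖ:ℤ) • q) = f := by
  funext i
  rw [mem_Fs] at hf
  simp only [ρ, Pi.add_apply, Pi.smul_apply, smul_eq_mul]
  rw [Int.add_mul_emod_self_left]
  exact Int.emod_eq_of_lt (hf i).1 (hf i).2

omit hNadd hNsmul hA in
include hϖ in
lemma countTot_eq (r : ℝ) (hfin : {v : Fin n → ℤ | N (fun i => (v i : ℝ)) < r}.Finite) :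
    Nat.card {v : Fin n → ℤ | N (fun i => (v i : ℝ)) < r} =
      ∑ f ∈ Fs n ϖ, {v : Fin n → ℤ | ρ ϖ v = f ∧ N (fun i => (v i : ℝ)) < r}.ncard := by
  classical
  set T := hfin.toFinset with hT
  have hmaps : ∀ v ∈ T, ρ ϖ v ∈ Fs n ϖ := fun v _ => rho_mem_Fs hϖ v
  have hb := Finset.biUnion_filter_eq_of_maps_to hmaps
  have hdisj : ∀ f ∈ Fs n ϖ, ∀ g ∈ Fs n ϖ, f ≠ g →
      Disjoint (T.filter (fun v => ρ ϖ v = f)) (T.filter (fun v => ρ ϖ v = g)) := by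
    intro f _ g _ hfg
    rw [Finset.disjoint_left]
    intro v hv hv'
    simp only [Finset.mem_filter] at hv hv'
    exact hfg (hv.2 ▸ hv'.2 ▸ rfl)
  have hcard : T.card = ∑ f ∈ Fs n ϖ, (T.filter (fun v => ρ ϖ v = f)).card := by
    conv_lhs => rw [← hb]
    exact Finset.card_biUnion hdisj
  rw [Nat.card_coe_set_eq, Set.ncard_eq_toFinset_card _ hfin, ← hT, hcard]
  refine Finset.sum_congr rfl fun f _ => ?_
  rw [← Set.ncard_coe_finset]
  congr 1
  ext v
  simp only [Finset.coe_filter, Set.mem_setOf_eq, hT, Set.Finite.mem_toFinset]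
  tauto

omit hNadd hNsmul in
include hϖ hA in
lemma countA_eq (r : ℝ) (hfin : {v : Fin n → ℤ | N (fun i => (v i : ℝ)) < r}.Finite) :
    Nat.card {a : Fin n → ℤ | a ∈ A ∧ N (fun i => (a i : ℝ)) < r} =
      ∑ f ∈ (Fs n ϖ).filter (· ∈ A),
        {v : Fin n → ℤ | ρ ϖ v = f ∧ N (fun i => (v i : ℝ)) < r}.ncard := by
  classical
  set T := hfin.toFinset with hT
  set TA := T.filter (· ∈ A) with hTA
  have hmaps : ∀ v ∈ TA, ρ ϖ v ∈ (Fs n ϖ).filter (· ∈ A) := by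
    intro v hv
    simp only [hTA, Finset.mem_filter] at hv ⊢
    exact ⟨rho_mem_Fs hϖ v, (mem_A_iff_rho hA v).1 hv.2⟩
  have hb := Finset.biUnion_filter_eq_of_maps_to hmaps
  have hdisj : ∀ f ∈ (Fs n ϖ).filter (· ∈ A), ∀ g ∈ (Fs n ϖ).filter (· ∈ A), f ≠ g →
      Disjoint (TA.filter (fun v => ρ ϖ v = f)) (TA.filter (fun v => ρ ϖ v = g)) := by
    intro f _ g _ hfg
    rw [Finset.disjoint_left]
    intro v hv hv'
    simp only [Finset.mem_filter] at hv hv'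
    exact hfg (hv.2 ▸ hv'.2 ▸ rfl)
  have hcard : TA.card = ∑ f ∈ (Fs n ϖ).filter (· ∈ A),
      (TA.filter (fun v => ρ ϖ v = f)).card := by
    conv_lhs => rw [← hb]
    exact Finset.card_biUnion hdisj
  have hset : {a : Fin n → ℤ | a ∈ A ∧ N (fun i => (a i : ℝ)) < r} = ↑TA := by
    ext v
    simp only [hTA, hT, Finset.coe_filter, Set.mem_setOf_eq, Set.Finite.mem_toFinset]
    tauto
  rw [Nat.card_coe_set_eq, hset, Set.ncard_coe_finset, hcard]
  refine Finset.sum_congr rfl fun f hf => ?_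
  simp only [Finset.mem_filter] at hf
  have hfilter : TA.filter (fun v => ρ ϖ v = f) = T.filter (fun v => ρ ϖ v = f) := by
    ext v
    simp only [hTA, Finset.filter_filter, Finset.mem_filter]
    constructor
    · tauto
    · rintro ⟨h1, h2⟩
      exact ⟨h1, (mem_A_iff_rho hA v).2 (h2 ▸ hf.2), h2⟩
  rw [hfilter, ← Set.ncard_coe_finset]
  congr 1
  ext v
  simp only [Finset.coe_filter, Set.mem_setOf_eq, hT, Set.Finite.mem_toFinset]
  tauto

omit hNadd hNsmul hϖ hA in
lemma cast_add_smul (f q : Fin n → ℤ) :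
    (fun i => ((f + (ϖ:ℤ) • q) i : ℝ)) = (fun i => (f i : ℝ)) + (ϖ:ℝ) • (fun i => (q i : ℝ)) := by
  funext i
  simp only [Pi.add_apply, Pi.smul_apply, smul_eq_mul]
  push_cast
  ring

omit hNadd hA in
include hNsmul hϖ in
lemma N_nat_smul (x : Fin n → ℝ) : N ((ϖ:ℝ) • x) = (ϖ:ℝ) * N x := by
  rw [hNsmul, abs_of_nonneg (by positivity : (0:ℝ) ≤ (ϖ:ℝ))]

variable {cF : ℝ} (hcF : ∀ f ∈ Fs n ϖ, N (fun i => (f i : ℝ)) ≤ cF)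

omit hA in
include hNadd hNsmul hϖ hcF in
lemma bound_low {f : Fin n → ℤ} (hf : f ∈ Fs n ϖ) (r : ℝ)
    (hfin : {v : Fin n → ℤ | N (fun i => (v i : ℝ)) < r}.Finite) :
    {q : Fin n → ℤ | N (fun i => (q i : ℝ)) < (r - cF)/ϖ}.ncard ≤
      {v : Fin n → ℤ | ρ ϖ v = f ∧ N (fun i => (v i : ℝ)) < r}.ncard := by
  have hϖR : (0:ℝ) < (ϖ:ℝ) := by positivity
  set φ : (Fin n → ℤ) → (Fin n → ℤ) := fun q => f + (ϖ:ℤ) • q with hφ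
  have hinj : Function.Injective φ := by
    intro q q' h
    simp only [hφ] at h
    have h2 : (ϖ:ℤ) • q = (ϖ:ℤ) • q' := add_left_cancel h
    have hϖZ : (ϖ:ℤ) ≠ 0 := by exact_mod_cast Nat.one_le_iff_ne_zero.1 hϖ
    funext i
    have := congrFun h2 i
    simp only [Pi.smul_apply, smul_eq_mul] at this
    exact mul_left_cancel₀ hϖZ this
  have himg : φ '' {q : Fin n → ℤ | N (fun i => (q i : ℝ)) < (r - cF)/ϖ} ⊆
      {v : Fin n → ℤ | ρ ϖ v = f ∧ N (fun i => (v i : ℝ)) < r} := by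
    rintro _ ⟨q, hq, rfl⟩
    simp only [Set.mem_setOf_eq] at hq ⊢
    refine ⟨rho_of_add hf q, ?_⟩
    rw [hφ]
    simp only
    rw [cast_add_smul]
    calc N ((fun i => (f i : ℝ)) + (ϖ:ℝ) • fun i => (q i : ℝ))
        ≤ N (fun i => (f i : ℝ)) + N ((ϖ:ℝ) • fun i => (q i : ℝ)) := hNadd _ _
      _ = N (fun i => (f i : ℝ)) + (ϖ:ℝ) * N (fun i => (q i : ℝ)) := by
          rw [N_nat_smul hNsmul hϖ]
      _ < cF + (ϖ:ℝ) * ((r - cF)/ϖ) := by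
          have h1 := hcF f hf
          have h2 : (ϖ:ℝ) * N (fun i => (q i : ℝ)) < (ϖ:ℝ) * ((r - cF)/ϖ) :=
            mul_lt_mul_of_pos_left hq hϖR
          linarith
      _ = r := by field_simp; ring
  calc {q : Fin n → ℤ | N (fun i => (q i : ℝ)) < (r - cF)/ϖ}.ncard
      = (φ '' {q : Fin n → ℤ | N (fun i => (q i : ℝ)) < (r - cF)/ϖ}).ncard :=
        (Set.ncard_image_of_injOn (hinj.injOn)).symm
    _ ≤ {v : Fin n → ℤ | ρ ϖ v = f ∧ N (fun i => (v i : ℝ)) < r}.ncard :=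
        Set.ncard_le_ncard himg (hfin.subset (fun v hv => hv.2))

omit hA in
include hNadd hNsmul hϖ hcF in
lemma bound_high {f : Fin n → ℤ} (hf : f ∈ Fs n ϖ) (r : ℝ)
    (hfin2 : {q : Fin n → ℤ | N (fun i => (q i : ℝ)) < (r + cF)/ϖ}.Finite) :
    {v : Fin n → ℤ | ρ ϖ v = f ∧ N (fun i => (v i : ℝ)) < r}.ncard ≤
      {q : Fin n → ℤ | N (fun i => (q i : ℝ)) < (r + cF)/ϖ}.ncard := by
  have hϖR : (0:ℝ) < (ϖ:ℝ) := by positivity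
  have hNneg : ∀ x, N (-x) = N x := fun x => by
    have h := hNsmul (-1) x
    simpa using h
  have hinj : Set.InjOn (qt ϖ) {v : Fin n → ℤ | ρ ϖ v = f ∧ N (fun i => (v i : ℝ)) < r} := by
    intro v hv w hw h
    have hv2 := rho_add_qt (ϖ := ϖ) v
    have hw2 := rho_add_qt (ϖ := ϖ) w
    rw [← hv2, ← hw2, hv.1, hw.1, h]
  have himg : qt ϖ '' {v : Fin n → ℤ | ρ ϖ v = f ∧ N (fun i => (v i : ℝ)) < r} ⊆
      {q : Fin n → ℤ | N (fun i => (q i : ℝ)) < (r + cF)/ϖ} := by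
    rintro _ ⟨v, hv, rfl⟩
    simp only [Set.mem_setOf_eq] at hv ⊢
    have hveq : (ϖ:ℤ) • qt ϖ v = v - f := by
      rw [← hv.1]
      rw [eq_sub_iff_add_eq, add_comm]
      exact (rho_add_qt v).symm ▸ rfl
    have hcast : (ϖ:ℝ) • (fun i => (qt ϖ v i : ℝ)) =
        (fun i => (v i : ℝ)) - (fun i => (f i : ℝ)) := by
      funext i
      have := congrFun hveq i
      simp only [Pi.smul_apply, smul_eq_mul, Pi.sub_apply] at this ⊢
      exact_mod_cast congrArg (Int.cast : ℤ → ℝ) this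
    have key : (ϖ:ℝ) * N (fun i => (qt ϖ v i : ℝ)) < r + cF := by
      rw [← N_nat_smul hNsmul hϖ, hcast]
      calc N ((fun i => (v i : ℝ)) - fun i => (f i : ℝ))
          ≤ N (fun i => (v i : ℝ)) + N (-(fun i => (f i : ℝ))) := by
            have := hNadd (fun i => (v i : ℝ)) (-(fun i => (f i : ℝ)))
            simpa [sub_eq_add_neg] using this
        _ = N (fun i => (v i : ℝ)) + N (fun i => (f i : ℝ)) := by rw [hNneg]
        _ < r + cF := add_lt_add_of_lt_of_le hv.2 (hcF f hf)
    rw [lt_div_iff₀ hϖR, mul_comm]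
    exact key
  calc {v : Fin n → ℤ | ρ ϖ v = f ∧ N (fun i => (v i : ℝ)) < r}.ncard
      = (qt ϖ '' {v : Fin n → ℤ | ρ ϖ v = f ∧ N (fun i => (v i : ℝ)) < r}).ncard :=
        (Set.ncard_image_of_injOn hinj).symm
    _ ≤ _ := Set.ncard_le_ncard himg hfin2
end residue

lemma tendsto_ratio (a b : ℝ) :
    Tendsto (fun r : ℝ => (r + a) / (r + b)) atTop (nhds 1) := by
  have h1 : Tendsto (fun r : ℝ => 1 + (a - b) / (r + b)) atTop (nhds 1) := by
    have h2 : Tendsto (fun r : ℝ => (a - b) / (r + b)) atTop (nhds 0) :=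
      Tendsto.div_atTop tendsto_const_nhds (tendsto_atTop_add_const_right atTop b tendsto_id)
    simpa using tendsto_const_nhds.add h2
  apply h1.congr'
  filter_upwards [eventually_gt_atTop (-b)] with r hr
  have hrb : r + b ≠ 0 := by linarith
  field_simp
  ring

end Stmt18
open Stmt18 in
set_option maxHeartbeats 1000000 in
/-- For any norm `N` on `ℝⁿ` and any `ϖ`-periodic subset `A ⊆ ℤⁿ`, the natural density
of `A` in `ℤⁿ` with respect to `N` exists and equals `|F ∩ A|/ϖⁿ`, where
`F = {0,…,ϖ−1}ⁿ`. -/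
theorem stmt_18 (n : ℕ) (N : (Fin n → ℝ) → ℝ)
    (hN0 : ∀ x, N x = 0 → x = 0)
    (hNadd : ∀ x y, N (x + y) ≤ N x + N y)
    (hNsmul : ∀ (c : ℝ) (x), N (c • x) = |c| * N x)
    (ϖ : ℕ) (hϖ : 1 ≤ ϖ) (A : Set (Fin n → ℤ))
    (hA : ∀ (a : Fin n → ℤ) (v : Fin n → ℤ), a ∈ A ↔ a + (ϖ : ℤ) • v ∈ A) :
    Tendsto (fun r : ℝ =>
        (Nat.card {a : Fin n → ℤ | a ∈ A ∧ N (fun i => (a i : ℝ)) < r} : ℝ) /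
        (Nat.card {v : Fin n → ℤ | N (fun i => (v i : ℝ)) < r} : ℝ))
      atTop
      (nhds ((Nat.card {x : Fin n → ℤ | (∀ i, 0 ≤ x i ∧ x i < ϖ) ∧ x ∈ A} : ℝ) / (ϖ : ℝ) ^ n)) := by
  classical
  have hpos : ∀ x, 0 ≤ N x := Nnonneg hNadd hNsmul
  have hcont : Continuous N := N_continuous hNadd hNsmul
  obtain ⟨c, hc, hlow⟩ := N_lower hN0 hNsmul hcont hpos
  have hfin : ∀ r : ℝ, {v : Fin n → ℤ | N (fun i => (v i : ℝ)) < r}.Finite :=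
    fun r => finite_lat hc hlow r
  have hD0 : 0 ≤ D N := D_nonneg hNadd hNsmul
  have hDb : ∀ x : Fin n → ℝ, (∀ i, |x i| ≤ 1) → N x ≤ D N := fun x h => by
    simpa using N_le_of_abs_le hNadd hNsmul h
  have hϖR : (0:ℝ) < (ϖ:ℝ) := by exact_mod_cast Nat.lt_of_lt_of_le Nat.zero_lt_one hϖ
  have hcF : ∀ f ∈ Fs n ϖ, N (fun i => (f i : ℝ)) ≤ (ϖ:ℝ) * D N := by
    intro f hf
    apply N_le_of_abs_le hNadd hNsmul
    intro i
    rw [mem_Fs] at hf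
    rw [abs_of_nonneg (by exact_mod_cast (hf i).1 : (0:ℝ) ≤ ((f i : ℤ):ℝ))]
    exact_mod_cast (hf i).2.le
  set κ := (volume (N ⁻¹' Set.Iio 1)).toReal with hκdef
  have hμtop : volume (N ⁻¹' Set.Iio 1) ≠ ⊤ := (ball_vol_lt_top hc hlow).ne
  have hκpos : 0 < κ :=
    ENNReal.toReal_pos (ball_vol_pos hNsmul hcont).ne' hμtop
  have hLlow : ∀ s : ℝ, 0 < s - D N →
      (s - D N)^n * κ ≤ ({v : Fin n → ℤ | N (fun i => (v i : ℝ)) < s}.ncard : ℝ) := by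
    intro s hs
    have h1 := vol_le_count hNadd hDb s (hfin s)
    rw [ball_vol hNsmul hs] at h1
    have h2 := (ENNReal.toReal_le_toReal
      (ENNReal.mul_ne_top ENNReal.ofReal_ne_top hμtop)
      (ENNReal.natCast_ne_top _)).2 h1
    rw [ENNReal.toReal_mul, ENNReal.toReal_ofReal (by positivity)] at h2
    rw [← Nat.card_coe_set_eq]
    exact_mod_cast h2
  have hLhigh : ∀ s : ℝ, 0 < s - D N →
      ({v : Fin n → ℤ | N (fun i => (v i : ℝ)) < s}.ncard : ℝ) ≤ (s + D N)^n * κ := by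
    intro s hs
    have hsD : 0 < s + D N := by linarith
    have h1 := count_le_vol hNadd hDb s (hfin s)
    rw [ball_vol hNsmul hsD] at h1
    have h2 := (ENNReal.toReal_le_toReal (ENNReal.natCast_ne_top _)
      (ENNReal.mul_ne_top ENNReal.ofReal_ne_top hμtop)).2 h1
    rw [ENNReal.toReal_mul, ENNReal.toReal_ofReal (by positivity)] at h2
    rw [← Nat.card_coe_set_eq]
    exact_mod_cast h2
  set FsA := (Fs n ϖ).filter (· ∈ A) with hFsA
  set k := FsA.card with hk
  have htarget : Nat.card {x : Fin n → ℤ | (∀ i, 0 ≤ x i ∧ x i < ϖ) ∧ x ∈ A} = k := by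
    have hset : {x : Fin n → ℤ | (∀ i, 0 ≤ x i ∧ x i < ϖ) ∧ x ∈ A} = ↑FsA := by
      ext x
      simp only [hFsA, Finset.coe_filter, Set.mem_setOf_eq, mem_Fs]
    rw [Nat.card_coe_set_eq, hset, Set.ncard_coe_finset]
  set cF := (ϖ:ℝ) * D N with hcFdef
  have hCA : ∀ r : ℝ,
      k * {q : Fin n → ℤ | N (fun i => (q i : ℝ)) < (r - cF)/ϖ}.ncard ≤
        Nat.card {a : Fin n → ℤ | a ∈ A ∧ N (fun i => (a i : ℝ)) < r} ∧
      Nat.card {a : Fin n → ℤ | a ∈ A ∧ N (fun i => (a i : ℝ)) < r} ≤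
        k * {q : Fin n → ℤ | N (fun i => (q i : ℝ)) < (r + cF)/ϖ}.ncard := by
    intro r
    rw [countA_eq hϖ hA r (hfin r)]
    constructor
    · calc k * {q : Fin n → ℤ | N (fun i => (q i : ℝ)) < (r - cF)/ϖ}.ncard
          = ∑ _f ∈ FsA, {q : Fin n → ℤ | N (fun i => (q i : ℝ)) < (r - cF)/ϖ}.ncard := by
            rw [Finset.sum_const, smul_eq_mul]
      _ ≤ _ := Finset.sum_le_sum fun f hf =>
            bound_low hNadd hNsmul hϖ hcF (Finset.mem_filter.1 hf).1 r (hfin r)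
    · calc ∑ f ∈ FsA, {v : Fin n → ℤ | ρ ϖ v = f ∧ N (fun i => (v i : ℝ)) < r}.ncard
          ≤ ∑ _f ∈ FsA, {q : Fin n → ℤ | N (fun i => (q i : ℝ)) < (r + cF)/ϖ}.ncard :=
            Finset.sum_le_sum fun f hf =>
              bound_high hNadd hNsmul hϖ hcF (Finset.mem_filter.1 hf).1 r (hfin _)
      _ = k * _ := by rw [Finset.sum_const, smul_eq_mul]
  have hCT : ∀ r : ℝ,
      ϖ^n * {q : Fin n → ℤ | N (fun i => (q i : ℝ)) < (r - cF)/ϖ}.ncard ≤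
        Nat.card {v : Fin n → ℤ | N (fun i => (v i : ℝ)) < r} ∧
      Nat.card {v : Fin n → ℤ | N (fun i => (v i : ℝ)) < r} ≤
        ϖ^n * {q : Fin n → ℤ | N (fun i => (q i : ℝ)) < (r + cF)/ϖ}.ncard := by
    intro r
    rw [countTot_eq hϖ r (hfin r)]
    constructor
    · calc ϖ^n * {q : Fin n → ℤ | N (fun i => (q i : ℝ)) < (r - cF)/ϖ}.ncard
          = ∑ _f ∈ Fs n ϖ, {q : Fin n → ℤ | N (fun i => (q i : ℝ)) < (r - cF)/ϖ}.ncard := by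
            rw [Finset.sum_const, smul_eq_mul, card_Fs]
      _ ≤ _ := Finset.sum_le_sum fun f hf =>
            bound_low hNadd hNsmul hϖ hcF hf r (hfin r)
    · calc ∑ f ∈ Fs n ϖ, {v : Fin n → ℤ | ρ ϖ v = f ∧ N (fun i => (v i : ℝ)) < r}.ncard
          ≤ ∑ _f ∈ Fs n ϖ, {q : Fin n → ℤ | N (fun i => (q i : ℝ)) < (r + cF)/ϖ}.ncard :=
            Finset.sum_le_sum fun f hf =>
              bound_high hNadd hNsmul hϖ hcF hf r (hfin _)
      _ = ϖ^n * _ := by rw [Finset.sum_const, smul_eq_mul, card_Fs]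
  set E := 2 * cF with hE
  have hcF0 : 0 ≤ cF := by positivity
  have hE0 : 0 ≤ E := by positivity
  rw [htarget]
  -- limits of the bounding functions
  have hup : Tendsto (fun r : ℝ => ((k:ℝ)/(ϖ:ℝ)^n) * ((r+E)/(r-E))^n) atTop
      (nhds ((k:ℝ)/(ϖ:ℝ)^n)) := by
    have h := ((tendsto_ratio E (-E)).pow n).const_mul ((k:ℝ)/(ϖ:ℝ)^n)
    simpa [sub_eq_add_neg] using h
  have hlo : Tendsto (fun r : ℝ => ((k:ℝ)/(ϖ:ℝ)^n) * ((r-E)/(r+E))^n) atTop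
      (nhds ((k:ℝ)/(ϖ:ℝ)^n)) := by
    have h := ((tendsto_ratio (-E) E).pow n).const_mul ((k:ℝ)/(ϖ:ℝ)^n)
    simpa [sub_eq_add_neg] using h
  apply tendsto_of_tendsto_of_tendsto_of_le_of_le' hlo hup
  · -- lower bound eventually
    filter_upwards [eventually_ge_atTop (E + 1)] with r hr
    have hrE : 0 < r - E := by linarith
    have hrE' : 0 < r + E := by linarith
    have e1 : (r - cF)/ϖ - D N = (r - E)/ϖ := by field_simp; ring
    have e2 : (r + cF)/ϖ + D N = (r + E)/ϖ := by field_simp; ring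
    have e3 : (r + cF)/ϖ - D N = r/ϖ := by field_simp; rw [hcFdef]; ring
    set L1 : ℝ := ({q : Fin n → ℤ | N (fun i => (q i : ℝ)) < (r - cF)/ϖ}.ncard : ℝ) with hL1
    set L2 : ℝ := ({q : Fin n → ℤ | N (fun i => (q i : ℝ)) < (r + cF)/ϖ}.ncard : ℝ) with hL2
    have hl1 : ((r-E)/ϖ)^n * κ ≤ L1 := by
      have := hLlow ((r - cF)/ϖ) (by rw [e1]; exact div_pos hrE hϖR)
      rwa [e1] at this
    have hl2 : L2 ≤ ((r+E)/ϖ)^n * κ := by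
      have := hLhigh ((r + cF)/ϖ) (by rw [e3]; exact div_pos (by linarith : (0:ℝ) < r) hϖR)
      rwa [e2] at this
    set p1 : ℝ := ((r-E)/ϖ)^n * κ with hp1
    set p2 : ℝ := ((r+E)/ϖ)^n * κ with hp2
    have hp1pos : 0 < p1 := by
      apply mul_pos _ hκpos
      exact pow_pos (div_pos hrE hϖR) n
    have hp2pos : 0 < p2 := by
      apply mul_pos _ hκpos
      exact pow_pos (div_pos hrE' hϖR) n
    have hCA' := hCA r
    have hCT' := hCT r
    have hCAl : (k:ℝ) * L1 ≤ (Nat.card {a : Fin n → ℤ | a ∈ A ∧ N (fun i => (a i : ℝ)) < r} : ℝ) := by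
      rw [hL1]; exact_mod_cast hCA'.1
    have hCAh : (Nat.card {a : Fin n → ℤ | a ∈ A ∧ N (fun i => (a i : ℝ)) < r} : ℝ) ≤ (k:ℝ) * L2 := by
      rw [hL2]; exact_mod_cast hCA'.2
    have hCTl : ((ϖ:ℝ))^n * L1 ≤ (Nat.card {v : Fin n → ℤ | N (fun i => (v i : ℝ)) < r} : ℝ) := by
      rw [hL1]; exact_mod_cast hCT'.1
    have hCTh : (Nat.card {v : Fin n → ℤ | N (fun i => (v i : ℝ)) < r} : ℝ) ≤ ((ϖ:ℝ))^n * L2 := by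
      rw [hL2]; exact_mod_cast hCT'.2
    have hbpos : (0:ℝ) < (Nat.card {v : Fin n → ℤ | N (fun i => (v i : ℝ)) < r} : ℝ) := by
      have h1 : (ϖ:ℝ)^n * p1 ≤ (ϖ:ℝ)^n * L1 :=
        mul_le_mul_of_nonneg_left hl1 (by positivity)
      have h2 : (0:ℝ) < (ϖ:ℝ)^n * p1 := by positivity
      linarith
    have key : ((k:ℝ) * p1)/((ϖ:ℝ)^n * p2) ≤
        (Nat.card {a : Fin n → ℤ | a ∈ A ∧ N (fun i => (a i : ℝ)) < r} : ℝ) /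
        (Nat.card {v : Fin n → ℤ | N (fun i => (v i : ℝ)) < r} : ℝ) := by
      refine div_le_div₀ (by positivity) ?_ ?_ ?_
      · calc (k:ℝ) * p1 ≤ (k:ℝ) * L1 := mul_le_mul_of_nonneg_left hl1 (by positivity)
          _ ≤ _ := hCAl
      · exact hbpos
      · calc (Nat.card {v : Fin n → ℤ | N (fun i => (v i : ℝ)) < r} : ℝ)
            ≤ (ϖ:ℝ)^n * L2 := hCTh
          _ ≤ (ϖ:ℝ)^n * p2 := mul_le_mul_of_nonneg_left hl2 (by positivity)
    have heq : ((k:ℝ) * p1)/((ϖ:ℝ)^n * p2) = ((k:ℝ)/(ϖ:ℝ)^n) * ((r-E)/(r+E))^n := by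
      rw [hp1, hp2, div_pow, div_pow, div_pow]
      field_simp
    rw [heq] at key
    exact key
  · -- upper bound eventually
    filter_upwards [eventually_ge_atTop (E + 1)] with r hr
    have hrE : 0 < r - E := by linarith
    have hrE' : 0 < r + E := by linarith
    have e1 : (r - cF)/ϖ - D N = (r - E)/ϖ := by field_simp; ring
    have e2 : (r + cF)/ϖ + D N = (r + E)/ϖ := by field_simp; ring
    have e3 : (r + cF)/ϖ - D N = r/ϖ := by field_simp; rw [hcFdef]; ring
    set L1 : ℝ := ({q : Fin n → ℤ | N (fun i => (q i : ℝ)) < (r - cF)/ϖ}.ncard : ℝ) with hL1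
    set L2 : ℝ := ({q : Fin n → ℤ | N (fun i => (q i : ℝ)) < (r + cF)/ϖ}.ncard : ℝ) with hL2
    have hl1 : ((r-E)/ϖ)^n * κ ≤ L1 := by
      have := hLlow ((r - cF)/ϖ) (by rw [e1]; exact div_pos hrE hϖR)
      rwa [e1] at this
    have hl2 : L2 ≤ ((r+E)/ϖ)^n * κ := by
      have := hLhigh ((r + cF)/ϖ) (by rw [e3]; exact div_pos (by linarith : (0:ℝ) < r) hϖR)
      rwa [e2] at this
    set p1 : ℝ := ((r-E)/ϖ)^n * κ with hp1
    set p2 : ℝ := ((r+E)/ϖ)^n * κ with hp2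
    have hp1pos : 0 < p1 := by
      apply mul_pos _ hκpos
      exact pow_pos (div_pos hrE hϖR) n
    have hCA' := hCA r
    have hCT' := hCT r
    have hCAh : (Nat.card {a : Fin n → ℤ | a ∈ A ∧ N (fun i => (a i : ℝ)) < r} : ℝ) ≤ (k:ℝ) * L2 := by
      rw [hL2]; exact_mod_cast hCA'.2
    have hCTl : ((ϖ:ℝ))^n * L1 ≤ (Nat.card {v : Fin n → ℤ | N (fun i => (v i : ℝ)) < r} : ℝ) := by
      rw [hL1]; exact_mod_cast hCT'.1
    have key : (Nat.card {a : Fin n → ℤ | a ∈ A ∧ N (fun i => (a i : ℝ)) < r} : ℝ) /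
        (Nat.card {v : Fin n → ℤ | N (fun i => (v i : ℝ)) < r} : ℝ) ≤
        ((k:ℝ) * p2)/((ϖ:ℝ)^n * p1) := by
      refine div_le_div₀ (by positivity) ?_ ?_ ?_
      · calc (Nat.card {a : Fin n → ℤ | a ∈ A ∧ N (fun i => (a i : ℝ)) < r} : ℝ)
            ≤ (k:ℝ) * L2 := hCAh
          _ ≤ (k:ℝ) * p2 := mul_le_mul_of_nonneg_left hl2 (by positivity)
      · positivity
      · calc (ϖ:ℝ)^n * p1 ≤ (ϖ:ℝ)^n * L1 :=
            mul_le_mul_of_nonneg_left hl1 (by positivity)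
          _ ≤ _ := hCTl
    have heq : ((k:ℝ) * p2)/((ϖ:ℝ)^n * p1) = ((k:ℝ)/(ϖ:ℝ)^n) * ((r+E)/(r-E))^n := by
      rw [hp1, hp2, div_pow, div_pow, div_pow]
      field_simp
    rw [heq] at key
    exact key
end
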